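/- arXiv:1008.2375 — 4 statements merged into one kernel-verified Lean document; each statement's English description precedes it below -/
import Mathlib

section
/- For all n ≥ 1 and 1 ≤ k ≤ n, the number of increasing ordered trees with n edges whose leaves taken in preorder are increasing and whose root has exactly k children equals u(n,k), where u(n,k) is defined by u(0,0) = 1, u(n,0) = 0 for n ≥ 1, and u(n,k) = u(n-1,k-1) + k·Σ_{j=k}^{n-1} u(n-1,j) for 1 ≤ k ≤ n. -/
inductive OTree : Type where
  | node : ℕ → List OTree → OTree

/-- The label of the root of the tree. -/
def OTree.label : OTree → ℕ
  | .node l _ => l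

/-- The (ordered) list of subtrees at the root. -/
def OTree.children : OTree → List OTree
  | .node _ ts => ts

/-- Labels of all vertices in preorder. -/
def OTree.preorder : OTree → List ℕ
  | .node l ts => l :: (ts.attach.map (fun t => OTree.preorder t.1)).flatten
decreasing_by
  have := List.sizeOf_lt_of_mem t.2
  simp only [OTree.node.sizeOf_spec]
  omega

/-- Labels of the leaves, in preorder (walkaround) order. -/
def OTree.leaves : OTree → List ℕ
  | .node l ts =>
      if ts.isEmpty then [l] else (ts.attach.map (fun t => OTree.leaves t.1)).flatten
decreasing_by
  have := List.sizeOf_lt_of_mem t.2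
  simp only [OTree.node.sizeOf_spec]
  omega

/-- Each child's label exceeds its parent's label. -/
inductive OTree.Increasing : OTree → Prop where
  | node : ∀ (l : ℕ) (ts : List OTree),
      (∀ t ∈ ts, l < t.label) → (∀ t ∈ ts, t.Increasing) →
      OTree.Increasing (.node l ts)

/-- An increasing ordered tree of size `n` (i.e. with `n` edges): an ordered
tree with `n+1` vertices labeled `0,1,...,n` (each label used exactly once, as
recorded by the preorder list of labels), rooted at the vertex labeled `0`,
such that each child's label exceeds its parent's label. -/
def IsIncOrdTree (n : ℕ) (t : OTree) : Prop :=
  t.label = 0 ∧ t.preorder.Perm (List.range (n + 1)) ∧ t.Increasing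

/-- The labels of the leaves, taken in preorder, are increasing. -/
def HasIncLeaves (t : OTree) : Prop :=
  t.leaves.Pairwise (· < ·)

namespace OTree

/-- strong induction principle -/
theorem ind' {P : OTree → Prop}
    (h : ∀ l ts, (∀ t ∈ ts, P t) → P (node l ts)) : ∀ t, P t := by
  have key : ∀ N t, sizeOf t ≤ N → P t := by
    intro N
    induction N with
    | zero => intro t ht; cases t with
      | node l ts => simp only [OTree.node.sizeOf_spec] at ht; omega
    | succ N ih =>
      intro t ht
      cases t with
      | node l ts =>
        refine h l ts (fun c hc => ih c ?_)
        have := List.sizeOf_lt_of_mem hc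
        simp only [OTree.node.sizeOf_spec] at ht
        omega
  exact fun t => key (sizeOf t) t le_rfl

@[simp] theorem preorder_node (l : ℕ) (ts : List OTree) :
    (node l ts).preorder = l :: (ts.map preorder).flatten := by
  rw [preorder]
  simp [List.attach_map_val]

@[simp] theorem leaves_node (l : ℕ) (ts : List OTree) :
    (node l ts).leaves = if ts.isEmpty then [l] else (ts.map leaves).flatten := by
  rw [leaves]
  simp [List.attach_map_val]

@[simp] theorem label_node (l ts) : (node l ts).label = l := rfl
@[simp] theorem children_node (l ts) : (node l ts).children = ts := rfl

theorem eta (t : OTree) : t = node t.label t.children := by cases t; rfl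

theorem preorder_ne_nil (t : OTree) : t.preorder ≠ [] := by
  cases t; simp

theorem label_mem_preorder (t : OTree) : t.label ∈ t.preorder := by
  cases t; simp

theorem leaves_ne_nil (t : OTree) : t.leaves ≠ [] := by
  induction t using ind' with
  | h l ts ih =>
    simp only [leaves_node]
    rcases ts with _ | ⟨c, ts⟩
    · simp
    · rw [if_neg (by simp)]
      intro hfl
      simp only [List.flatten_eq_nil_iff] at hfl
      exact ih c (by simp) (hfl _ (by simp))

theorem leaves_subset_preorder (t : OTree) : ∀ v ∈ t.leaves, v ∈ t.preorder := by
  induction t using ind' with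
  | h l ts ih =>
    intro v hv
    simp only [leaves_node] at hv
    by_cases h0 : ts.isEmpty
    · rw [if_pos h0] at hv
      simp only [List.mem_singleton] at hv
      simp [hv]
    · rw [if_neg h0] at hv
      simp only [List.mem_flatten, List.mem_map] at hv
      obtain ⟨_, ⟨c, hc, rfl⟩, hvc⟩ := hv
      simp only [preorder_node, List.mem_cons, List.mem_flatten, List.mem_map]
      exact Or.inr ⟨c.preorder, ⟨c, hc, rfl⟩, ih c hc v hvc⟩

theorem Increasing.le_of_mem_preorder {t : OTree} (h : t.Increasing) :
    ∀ v ∈ t.preorder, t.label ≤ v := by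
  induction t using ind' with
  | h l ts ih =>
    intro v hv
    cases h with
    | node _ _ hroot hsub =>
      simp only [preorder_node, List.mem_cons, List.mem_flatten, List.mem_map] at hv
      rcases hv with rfl | ⟨_, ⟨c, hc, rfl⟩, hvc⟩
      · simp
      · have := ih c hc (hsub c hc) v hvc
        have := hroot c hc
        simp only [label_node]
        omega
def relabel (f : ℕ → ℕ) : OTree → OTree
  | .node l ts => .node (f l) (ts.attach.map (fun t => relabel f t.1))
decreasing_by
  have := List.sizeOf_lt_of_mem t.2
  simp only [OTree.node.sizeOf_spec]
  omega

@[simp] theorem relabel_node (f : ℕ → ℕ) (l ts) :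
    relabel f (node l ts) = node (f l) (ts.map (relabel f)) := by
  rw [relabel]
  simp [List.attach_map_val]

@[simp] theorem label_relabel (f : ℕ → ℕ) (t : OTree) :
    (relabel f t).label = f t.label := by cases t; simp

@[simp] theorem children_relabel (f : ℕ → ℕ) (t : OTree) :
    (relabel f t).children = t.children.map (relabel f) := by cases t; simp

theorem preorder_relabel (f : ℕ → ℕ) (t : OTree) :
    (relabel f t).preorder = t.preorder.map f := by
  induction t using ind' with
  | h l ts ih =>
    simp only [relabel_node, preorder_node, List.map_cons, List.map_flatten, List.map_map,
      List.cons.injEq, true_and]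
    congr 1
    exact List.map_congr_left fun c hc => ih c hc

theorem leaves_relabel (f : ℕ → ℕ) (t : OTree) :
    (relabel f t).leaves = t.leaves.map f := by
  induction t using ind' with
  | h l ts ih =>
    have hemp : (ts.map (OTree.relabel f)).isEmpty = ts.isEmpty := by
      cases ts <;> simp
    simp only [relabel_node, leaves_node, hemp]
    by_cases h0 : ts.isEmpty
    · simp [h0]
    · rw [if_neg h0, if_neg h0, List.map_flatten, List.map_map, List.map_map]
      congr 1
      exact List.map_congr_left fun c hc => ih c hc

theorem relabel_relabel (f g : ℕ → ℕ) (t : OTree) :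
    relabel f (relabel g t) = relabel (f ∘ g) t := by
  induction t using ind' with
  | h l ts ih =>
    simp only [relabel_node, List.map_map, OTree.node.injEq, Function.comp_apply, true_and]
    exact List.map_congr_left fun c hc => ih c hc

theorem relabel_id_of (f : ℕ → ℕ) (t : OTree) (h : ∀ v ∈ t.preorder, f v = v) :
    relabel f t = t := by
  induction t using ind' with
  | h l ts ih =>
    simp only [relabel_node, OTree.node.injEq]
    constructor
    · exact h l (by simp)
    · conv_rhs => rw [← List.map_id ts]
      refine List.map_congr_left fun c hc => ?_
      refine ih c hc fun v hv => h v ?_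
      simp only [preorder_node, List.mem_cons, List.mem_flatten, List.mem_map]
      exact Or.inr ⟨c.preorder, ⟨c, hc, rfl⟩, hv⟩

theorem Increasing.relabel {t : OTree} (h : t.Increasing) (f : ℕ → ℕ)
    (hf : ∀ a ∈ t.preorder, ∀ b ∈ t.preorder, a < b → f a < f b) :
    (OTree.relabel f t).Increasing := by
  induction t using ind' with
  | h l ts ih =>
    cases h with
    | node _ _ hroot hsub =>
      rw [relabel_node]
      have hmem : ∀ c ∈ ts, ∀ v ∈ c.preorder, v ∈ (OTree.node l ts).preorder := by
        intro c hc v hv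
        simp only [preorder_node, List.mem_cons, List.mem_flatten, List.mem_map]
        exact Or.inr ⟨c.preorder, ⟨c, hc, rfl⟩, hv⟩
      refine OTree.Increasing.node _ _ ?_ ?_
      · intro c hc
        simp only [List.mem_map] at hc
        obtain ⟨c0, hc0, rfl⟩ := hc
        rw [label_relabel]
        exact hf l (by simp [preorder_node]) c0.label
          (hmem c0 hc0 _ (label_mem_preorder c0)) (hroot c0 hc0)
      · intro c hc
        simp only [List.mem_map] at hc
        obtain ⟨c0, hc0, rfl⟩ := hc
        exact ih c0 hc0 (hsub c0 hc0) fun a ha b hb hab =>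
          hf a (hmem c0 hc0 a ha) b (hmem c0 hc0 b hb) hab

def inc : OTree → OTree := relabel (· + 1)
def dec : OTree → OTree := relabel (· - 1)

theorem dec_inc (t : OTree) : dec (inc t) = t := by
  rw [inc, dec, relabel_relabel]
  exact relabel_id_of _ _ (by intros; simp)

theorem inc_dec (t : OTree) (h : ∀ v ∈ t.preorder, 1 ≤ v) : inc (dec t) = t := by
  rw [inc, dec, relabel_relabel]
  refine relabel_id_of _ _ fun v hv => ?_
  have := h v hv
  simp only [Function.comp_apply]
  omega

theorem inc_injective : Function.Injective inc := by
  intro a b h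
  rw [← dec_inc a, h, dec_inc]
def enc : OTree → List (Option ℕ)
  | .node l ts => some l :: (ts.attach.map (fun t => enc t.1)).flatten ++ [none]
decreasing_by
  have := List.sizeOf_lt_of_mem t.2
  simp only [OTree.node.sizeOf_spec]
  omega

@[simp] theorem enc_node (l ts) :
    enc (node l ts) = some l :: (ts.map enc).flatten ++ [none] := by
  rw [enc]
  simp [List.attach_map_val]

theorem enc_key : ∀ N,
    (∀ t s : OTree, ∀ r₁ r₂ : List (Option ℕ), sizeOf t ≤ N →
      enc t ++ r₁ = enc s ++ r₂ → t = s ∧ r₁ = r₂) ∧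
    (∀ ts ss : List OTree, ∀ r₁ r₂ : List (Option ℕ), sizeOf ts ≤ N →
      (ts.map enc).flatten ++ none :: r₁ = (ss.map enc).flatten ++ none :: r₂ →
      ts = ss ∧ r₁ = r₂) := by
  intro N
  induction N using Nat.strong_induction_on with
  | _ N ih =>
    constructor
    · rintro ⟨l, ts⟩ ⟨l', ss⟩ r₁ r₂ hN heq
      simp only [enc_node, List.cons_append, List.append_assoc, List.singleton_append,
        List.cons.injEq, Option.some.injEq] at heq
      obtain ⟨rfl, heq⟩ := heq
      have hts : sizeOf ts ≤ N - 1 := by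
        simp only [OTree.node.sizeOf_spec] at hN; omega
      have hN1 : N - 1 < N := by
        have : 1 ≤ sizeOf ts := by cases ts <;> simp <;> omega
        omega
      obtain ⟨rfl, rfl⟩ := (ih (N-1) hN1).2 ts ss r₁ r₂ hts heq
      exact ⟨rfl, rfl⟩
    · rintro (_ | ⟨t, ts⟩) (_ | ⟨s, ss⟩) r₁ r₂ hN heq
      · simp only [List.map_nil, List.flatten_nil, List.nil_append, List.cons.injEq] at heq
        exact ⟨rfl, heq.2⟩
      · exfalso
        rcases s with ⟨l', ss'⟩
        simp only [List.map_nil, List.flatten_nil, List.nil_append, List.map_cons,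
          List.flatten_cons, enc_node, List.cons_append, List.append_assoc,
          List.cons.injEq] at heq
        exact absurd heq.1 (by simp)
      · exfalso
        rcases t with ⟨l, ts'⟩
        simp only [List.map_nil, List.flatten_nil, List.nil_append, List.map_cons,
          List.flatten_cons, enc_node, List.cons_append, List.append_assoc,
          List.cons.injEq] at heq
        exact absurd heq.1 (by simp)
      · simp only [List.map_cons, List.flatten_cons, List.append_assoc] at heq
        have h1 : sizeOf t ≤ N - 1 ∧ sizeOf ts ≤ N - 1 ∧ N - 1 < N := by
          have : 1 ≤ sizeOf t := by rcases t with ⟨a,b⟩; simp; omega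
          simp only [List.cons.sizeOf_spec] at hN
          omega
        obtain ⟨rfl, heq2⟩ := (ih (N-1) h1.2.2).1 t s _ _ h1.1 heq
        obtain ⟨rfl, rfl⟩ := (ih (N-1) h1.2.2).2 ts ss r₁ r₂ h1.2.1 heq2
        exact ⟨rfl, rfl⟩

theorem enc_injective : Function.Injective enc := by
  intro t s h
  have := ((enc_key (sizeOf t)).1 t s [] [] le_rfl (by simpa using h)).1
  exact this

theorem enc_length (t : OTree) : (enc t).length = 2 * t.preorder.length := by
  induction t using ind' with
  | h l ts ih =>
    simp only [enc_node, preorder_node, List.length_append, List.length_cons,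
      List.length_flatten, List.map_map, List.length_singleton]
    have : (List.map (List.length ∘ enc) ts).sum = (List.map (List.length ∘ preorder) ts).sum * 2 := by
      induction ts with
      | nil => simp
      | cons c cs ihc =>
        simp only [List.map_cons, List.sum_cons, Function.comp_apply,
          ih c (by simp), ihc (fun x hx => ih x (by simp [hx]))]
        ring
    simp only [List.map_map, List.length_nil] at *
    omega
theorem enc_mem (t : OTree) : ∀ x ∈ enc t, ∀ v, x = some v → v ∈ t.preorder := by
  induction t using ind' with
  | h l ts ih =>
    intro x hx v hv
    subst hv
    simp only [enc_node, List.mem_append, List.mem_cons, List.mem_flatten, List.mem_map,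
      List.mem_singleton] at hx
    simp only [preorder_node, List.mem_cons, List.mem_flatten, List.mem_map]
    rcases hx with ((heq | ⟨_, ⟨c, hc, rfl⟩, hxc⟩) | habs)
    · exact Or.inl (by simpa using heq)
    · exact Or.inr ⟨c.preorder, ⟨c, hc, rfl⟩, ih c hc _ hxc _ rfl⟩
    · exact absurd habs (by simp)

theorem finite_perm (n : ℕ) :
    {t : OTree | t.preorder.Perm (List.range (n + 1))}.Finite := by
  classical
  set g : OTree → List (Option (Fin (n + 1))) :=
    fun t => (enc t).map (Option.map (fun v => (⟨min v n, by omega⟩ : Fin (n + 1)))) with hg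
  have back : ∀ t ∈ {t : OTree | t.preorder.Perm (List.range (n + 1))},
      (g t).map (Option.map Fin.val) = enc t := by
    intro t ht
    rw [hg]
    simp only [List.map_map]
    conv_rhs => rw [← List.map_id (enc t)]
    refine List.map_congr_left fun x hx => ?_
    rcases x with _ | v
    · simp
    · have hv := enc_mem t _ hx v rfl
      have : v ∈ List.range (n + 1) := ht.mem_iff.mp hv
      simp only [List.mem_range] at this
      simp only [Function.comp_apply, Option.map_map, Option.map_some, id_eq]
      congr 1
      omega
  refine Set.Finite.of_finite_image (f := g) ?_ ?_
  · refine Set.Finite.subset (List.finite_length_le (Option (Fin (n+1))) (2 * (n+1))) ?_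
    rintro l ⟨t, ht, rfl⟩
    simp only [Set.mem_setOf_eq, hg, List.length_map, enc_length]
    rw [ht.length_eq, List.length_range]
  · intro t ht s hs heq
    exact enc_injective (by rw [← back t ht, ← back s hs, heq])

theorem finite_pred (n : ℕ) (p : OTree → Prop)
    (hp : ∀ t, p t → t.preorder.Perm (List.range (n + 1))) : Finite {t // p t} := by
  have := (finite_perm n).to_subtype
  exact Finite.of_injective
    (fun x : {t // p t} => (⟨x.1, hp _ x.2⟩ : {t : OTree | t.preorder.Perm (List.range (n + 1))}))
    (fun a b h => by
      apply Subtype.ext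
      have := congrArg Subtype.val h
      simpa using this)
theorem range_ms (n : ℕ) :
    ((List.range (n + 1) : List ℕ) : Multiset ℕ)
      = 0 ::ₘ Multiset.map (· + 1) ((List.range n : List ℕ) : Multiset ℕ) := by
  rw [List.range_succ_eq_map]
  simp only [Multiset.map_coe]
  rfl

theorem ms_up {n : ℕ} (hn : 1 ≤ n) {S : Multiset ℕ}
    (h : 0 ::ₘ S = ((List.range n : List ℕ) : Multiset ℕ)) :
    0 ::ₘ 1 ::ₘ S.map (· + 1) = ((List.range (n + 1) : List ℕ) : Multiset ℕ) := by
  obtain ⟨m, rfl⟩ : ∃ m, n = m + 1 := ⟨n - 1, by omega⟩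
  rw [range_ms] at h
  have hS : S = Multiset.map (· + 1) ((List.range m : List ℕ) : Multiset ℕ) :=
    (Multiset.cons_inj_right 0).mp h
  subst hS
  rw [range_ms (m+1), range_ms m]
  simp [Multiset.map_map, Multiset.map_cons]

theorem ms_down {n : ℕ} (hn : 1 ≤ n) {S : Multiset ℕ}
    (h : 0 ::ₘ 1 ::ₘ S = ((List.range (n + 1) : List ℕ) : Multiset ℕ)) :
    0 ::ₘ S.map (· - 1) = ((List.range n : List ℕ) : Multiset ℕ) := by
  obtain ⟨m, rfl⟩ : ∃ m, n = m + 1 := ⟨n - 1, by omega⟩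
  rw [range_ms (m+1), range_ms m] at h
  simp only [Multiset.map_cons, Multiset.map_map] at h
  have h1 := (Multiset.cons_inj_right 0).mp h
  have hS : S = Multiset.map ((· + 1) ∘ (· + 1)) ((List.range m : List ℕ) : Multiset ℕ) :=
    (Multiset.cons_inj_right 1).mp h1
  subst hS
  rw [range_ms, Multiset.map_map]
  rw [Multiset.cons_inj_right]
  exact Multiset.map_congr rfl fun x _ => by simp

/-- positivity of all labels below the root -/
theorem sub_pos {l : ℕ} {cs : List OTree} (hI : (node l cs).Increasing) :
    ∀ c ∈ cs, ∀ v ∈ c.preorder, l + 1 ≤ v := by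
  cases hI with
  | node _ _ hroot hsub =>
    intro c hc v hv
    have h1 := (hsub c hc).le_of_mem_preorder v hv
    have h2 := hroot c hc
    omega

theorem sorted_map_add {L : List ℕ} (h : L.Pairwise (· < ·)) :
    (L.map (· + 1)).Pairwise (· < ·) := by
  rw [List.pairwise_map]
  exact h.imp (by omega)

theorem sorted_map_sub {L : List ℕ} (h : L.Pairwise (· < ·)) (h1 : ∀ v ∈ L, 1 ≤ v) :
    (L.map (· - 1)).Pairwise (· < ·) := by
  rw [List.pairwise_map]
  refine List.Pairwise.imp_of_mem ?_ h
  intro a b ha hb hab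
  have := h1 a ha
  omega

def Fmap (k : ℕ) : OTree ⊕ (Fin k × OTree) → OTree
  | .inl t => .node 0 (.node 1 [] :: t.children.map inc)
  | .inr (i, t) =>
      let cs := t.children.map inc
      let m := cs.length - k + 1
      .node 0 (cs.take i ++ .node 1 ((cs.drop i).take m) :: cs.drop (i + m))
def Good (n k : ℕ) (t : OTree) : Prop :=
  IsIncOrdTree n t ∧ HasIncLeaves t ∧ t.children.length = k

def GoodGe (n k : ℕ) (t : OTree) : Prop :=
  IsIncOrdTree n t ∧ HasIncLeaves t ∧ k ≤ t.children.length

@[simp] theorem Fmap_inl (k : ℕ) (t : OTree) :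
    Fmap k (.inl t) = .node 0 (.node 1 [] :: t.children.map inc) := rfl

@[simp] theorem Fmap_inr (k : ℕ) (i : Fin k) (t : OTree) :
    Fmap k (.inr (i, t)) = .node 0 ((t.children.map inc).take i
      ++ .node 1 (((t.children.map inc).drop i).take ((t.children.map inc).length - k + 1))
      :: (t.children.map inc).drop (i + ((t.children.map inc).length - k + 1))) := rfl

theorem flat_pre_relabel (f : ℕ → ℕ) (cs : List OTree) :
    ((cs.map (relabel f)).map preorder).flatten = ((cs.map preorder).flatten).map f := by
  rw [List.map_flatten, List.map_map, List.map_map]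
  congr 1
  exact List.map_congr_left fun c _ => by
    simp only [Function.comp_apply, preorder_relabel]

theorem flat_lv_relabel (f : ℕ → ℕ) (cs : List OTree) :
    ((cs.map (relabel f)).map leaves).flatten = ((cs.map leaves).flatten).map f := by
  rw [List.map_flatten, List.map_map, List.map_map]
  congr 1
  exact List.map_congr_left fun c _ => by
    simp only [Function.comp_apply, leaves_relabel]

theorem flat_pre_inc (cs : List OTree) :
    ((cs.map inc).map preorder).flatten = ((cs.map preorder).flatten).map (· + 1) := by
  simp only [inc]; exact flat_pre_relabel _ cs

theorem flat_lv_inc (cs : List OTree) :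
    ((cs.map inc).map leaves).flatten = ((cs.map leaves).flatten).map (· + 1) := by
  simp only [inc]; exact flat_lv_relabel _ cs

theorem flat_pre_dec (cs : List OTree) :
    ((cs.map dec).map preorder).flatten = ((cs.map preorder).flatten).map (· - 1) := by
  simp only [dec]; exact flat_pre_relabel _ cs

theorem flat_lv_dec (cs : List OTree) :
    ((cs.map dec).map leaves).flatten = ((cs.map leaves).flatten).map (· - 1) := by
  simp only [dec]; exact flat_lv_relabel _ cs

theorem inc_facts {cs : List OTree} (hinc : (node 0 cs).Increasing) :
    ∀ x ∈ cs.map inc, x.Increasing ∧ 2 ≤ x.label ∧ ∀ v ∈ x.preorder, 1 ≤ v := by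
  cases hinc with
  | node _ _ hroot hsub =>
    rintro x hx
    simp only [List.mem_map] at hx
    obtain ⟨c, hc, rfl⟩ := hx
    refine ⟨(hsub c hc).relabel _ (by omega), ?_, ?_⟩
    · have := hroot c hc
      simp only [inc, label_relabel]
      omega
    · intro v hv
      rw [inc, preorder_relabel] at hv
      simp only [List.mem_map] at hv
      obtain ⟨w, _, rfl⟩ := hv
      omega

theorem leaves_pos {cs : List OTree} (hinc : (node 0 cs).Increasing) :
    ∀ v ∈ (cs.map leaves).flatten, 1 ≤ v := by
  intro v hv
  simp only [List.mem_flatten, List.mem_map] at hv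
  obtain ⟨_, ⟨c, hc, rfl⟩, hvc⟩ := hv
  exact sub_pos hinc c hc v (leaves_subset_preorder c v hvc)

theorem wd_inl {n k : ℕ} (hn : 2 ≤ n) (hk : 1 ≤ k) {t : OTree}
    (ht : Good (n - 1) (k - 1) t) : Good n k (Fmap k (.inl t)) := by
  obtain ⟨⟨hlab, hperm, hinc⟩, hleaf, hlen⟩ := ht
  obtain ⟨l, cs⟩ := t
  simp only [label_node] at hlab
  subst hlab
  simp only [children_node] at hlen
  rw [Nat.sub_add_cancel (by omega : 1 ≤ n)] at hperm
  have hfacts := inc_facts hinc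
  have hpre : (Fmap k (.inl (node 0 cs))).preorder
      = 0 :: 1 :: ((cs.map preorder).flatten.map (· + 1)) := by
    rw [Fmap_inl, children_node, preorder_node, List.map_cons, List.flatten_cons,
      flat_pre_inc cs, preorder_node]
    rfl
  have hlv : (Fmap k (.inl (node 0 cs))).leaves
      = 1 :: ((cs.map leaves).flatten.map (· + 1)) := by
    rw [Fmap_inl, children_node, leaves_node, if_neg (by simp)]
    rw [List.map_cons, List.flatten_cons, leaves_node, if_pos (by simp), flat_lv_inc cs]
    rfl
  refine ⟨⟨rfl, ?_, ?_⟩, ?_, ?_⟩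
  · -- perm
    rw [← Multiset.coe_eq_coe] at hperm ⊢
    rw [hpre]
    simp only [preorder_node, ← Multiset.cons_coe, ← Multiset.map_coe] at hperm ⊢
    exact ms_up (by omega) hperm
  · -- Increasing
    simp only [Fmap_inl, children_node]
    refine Increasing.node _ _ ?_ ?_
    · intro c hc
      rcases List.mem_cons.mp hc with rfl | hc
      · simp
      · have := (hfacts c hc).2.1
        omega
    · intro c hc
      rcases List.mem_cons.mp hc with rfl | hc
      · exact Increasing.node _ _ (by simp) (by simp)
      · exact (hfacts c hc).1
  · -- leaves
    rw [HasIncLeaves, hlv, List.pairwise_cons]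
    rcases cs with _ | ⟨c0, cs0⟩
    · simp
    · rw [HasIncLeaves, leaves_node, if_neg (by simp)] at hleaf
      constructor
      · intro b hb
        simp only [List.mem_map] at hb
        obtain ⟨v, hv, rfl⟩ := hb
        have := leaves_pos hinc v hv
        omega
      · exact sorted_map_add hleaf
  · -- children length
    simp only [Fmap_inl, children_node, List.length_cons, List.length_map]
    omega
theorem wd_inr {n k : ℕ} (hn : 2 ≤ n) (hk : 1 ≤ k) (i : Fin k) {t : OTree}
    (ht : GoodGe (n - 1) k t) : Good n k (Fmap k (.inr (i, t))) := by
  obtain ⟨⟨hlab, hperm, hinc⟩, hleaf, hlen⟩ := ht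
  obtain ⟨l, cs⟩ := t
  simp only [label_node] at hlab
  subst hlab
  simp only [children_node] at hlen
  rw [Nat.sub_add_cancel (by omega : 1 ≤ n)] at hperm
  have hfacts := inc_facts hinc
  set CS := cs.map inc with hCS
  have hj : CS.length = cs.length := List.length_map _
  set m := CS.length - k + 1 with hm
  have hkj : k ≤ CS.length := by omega
  have hik : (i : ℕ) < k := i.2
  have him : (i : ℕ) + m ≤ CS.length := by omega
  set A := CS.take i with hA
  set M := (CS.drop i).take m with hM
  set B := CS.drop ((i : ℕ) + m) with hB
  have hlenA : A.length = (i : ℕ) := by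
    rw [hA, List.length_take]; omega
  have hlenM : M.length = m := by
    rw [hM, List.length_take, List.length_drop]; omega
  have hlenB : B.length = CS.length - ((i : ℕ) + m) := by
    rw [hB, List.length_drop]
  have hMB : M ++ B = CS.drop i := by
    rw [hM, hB, ← List.drop_drop]
    exact List.take_append_drop _ _
  have hAMB : A ++ (M ++ B) = CS := by
    rw [hMB, hA]
    exact List.take_append_drop _ _
  have hmemA : ∀ x ∈ A, x ∈ CS := fun x hx => List.take_subset _ _ hx
  have hmemM : ∀ x ∈ M, x ∈ CS := fun x hx =>
    List.drop_subset _ _ (List.take_subset _ _ hx)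
  have hmemB : ∀ x ∈ B, x ∈ CS := fun x hx => List.drop_subset _ _ hx
  have hMne : M ≠ [] := by
    intro h
    rw [h] at hlenM
    simp only [List.length_nil] at hlenM
    omega
  have hcsne : cs ≠ [] := List.ne_nil_of_length_pos (by omega)
  have hshape : Fmap k (.inr (i, node 0 cs)) = node 0 (A ++ node 1 M :: B) := rfl
  -- preorder list identity
  have hpre : (Fmap k (.inr (i, node 0 cs))).preorder.Perm
      (0 :: 1 :: ((cs.map preorder).flatten.map (· + 1))) := by
    rw [hshape, preorder_node]
    refine List.Perm.cons 0 ?_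
    have : (List.map preorder (A ++ node 1 M :: B)).flatten
        = (A.map preorder).flatten ++ (1 :: (M.map preorder).flatten)
          ++ (B.map preorder).flatten := by
      simp [List.map_append, List.flatten_append, preorder_node]
    rw [this]
    have e1 : (A.map preorder).flatten ++ (1 :: (M.map preorder).flatten)
          ++ (B.map preorder).flatten
        = (A.map preorder).flatten ++ 1 :: ((M.map preorder).flatten
          ++ (B.map preorder).flatten) := by
      simp [List.append_assoc]
    rw [e1]
    have h2 := List.perm_middle (a := 1) (l₁ := (A.map preorder).flatten)
      (l₂ := (M.map preorder).flatten ++ (B.map preorder).flatten)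
    refine h2.trans (List.Perm.cons 1 ?_)
    have h3 : (A.map preorder).flatten ++ ((M.map preorder).flatten
        ++ (B.map preorder).flatten) = (CS.map preorder).flatten := by
      rw [← hAMB]
      simp [List.map_append, List.flatten_append, List.append_assoc]
    rw [h3, hCS, flat_pre_inc]
  -- leaves identity
  have hlv : (Fmap k (.inr (i, node 0 cs))).leaves
      = ((cs.map leaves).flatten.map (· + 1)) := by
    rw [hshape, leaves_node, if_neg (by simp)]
    have : (List.map leaves (A ++ node 1 M :: B)).flatten
        = (A.map leaves).flatten ++ ((M.map leaves).flatten
          ++ (B.map leaves).flatten) := by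
      simp only [List.map_append, List.flatten_append, List.map_cons, List.flatten_cons,
        leaves_node]
      rw [if_neg (show ¬(M.isEmpty = true) by simpa using hMne)]
    rw [this]
    have h3 : (A.map leaves).flatten ++ ((M.map leaves).flatten
        ++ (B.map leaves).flatten) = (CS.map leaves).flatten := by
      rw [← hAMB]
      simp [List.map_append, List.flatten_append, List.append_assoc]
    rw [h3, hCS, flat_lv_inc]
  refine ⟨⟨rfl, ?_, ?_⟩, ?_, ?_⟩
  · -- perm
    refine hpre.trans ?_
    rw [← Multiset.coe_eq_coe] at hperm ⊢
    rw [preorder_node] at hperm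
    simp only [← Multiset.cons_coe, ← Multiset.map_coe] at hperm ⊢
    exact ms_up (by omega) hperm
  · -- increasing
    rw [hshape]
    refine Increasing.node _ _ ?_ ?_
    · intro c hc
      rcases List.mem_append.mp hc with hc | hc
      · have := (hfacts c (hmemA c hc)).2.1; omega
      · rcases List.mem_cons.mp hc with rfl | hc
        · simp
        · have := (hfacts c (hmemB c hc)).2.1; omega
    · intro c hc
      rcases List.mem_append.mp hc with hc | hc
      · exact (hfacts c (hmemA c hc)).1
      · rcases List.mem_cons.mp hc with rfl | hc
        · refine Increasing.node _ _ ?_ ?_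
          · intro x hx
            have := (hfacts x (hmemM x hx)).2.1; omega
          · intro x hx
            exact (hfacts x (hmemM x hx)).1
        · exact (hfacts c (hmemB c hc)).1
  · -- leaves sorted
    rw [HasIncLeaves, hlv]
    have : HasIncLeaves (node 0 cs) := hleaf
    rw [HasIncLeaves, leaves_node, if_neg (by simp [hcsne])] at this
    exact sorted_map_add this
  · -- children length
    rw [hshape, children_node]
    simp only [List.length_append, List.length_cons]
    omega
theorem split_unique : ∀ {A A' B B' : List OTree} {x x' : OTree},
    A ++ x :: B = A' ++ x' :: B' → x.label = 1 → x'.label = 1 →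
    (∀ a ∈ A, a.label ≠ 1) → (∀ a ∈ A', a.label ≠ 1) →
    A = A' ∧ x = x' ∧ B = B' := by
  intro A
  induction A with
  | nil =>
    intro A' B B' x x' h hx hx' hA hA'
    cases A' with
    | nil =>
      simp only [List.nil_append, List.cons.injEq] at h
      exact ⟨rfl, h.1, h.2⟩
    | cons a' A'' =>
      exfalso
      simp only [List.nil_append, List.cons_append, List.cons.injEq] at h
      exact hA' a' (by simp) (h.1 ▸ hx)
  | cons a A₂ ih =>
    intro A' B B' x x' h hx hx' hA hA'
    cases A' with
    | nil =>
      exfalso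
      simp only [List.nil_append, List.cons_append, List.cons.injEq] at h
      exact hA a (by simp) (h.1.symm ▸ hx')
    | cons a' A'' =>
      simp only [List.cons_append, List.cons.injEq] at h
      obtain ⟨rfl, h2⟩ := h
      obtain ⟨h3, h4, h5⟩ := ih h2 hx hx' (fun b hb => hA b (by simp [hb]))
        (fun b hb => hA' b (by simp [hb]))
      exact ⟨by rw [h3], h4, h5⟩

theorem inr_shape {k : ℕ} (hk : 1 ≤ k) (i : Fin k) {t : OTree}
    (hinc : t.Increasing) (hlab : t.label = 0) (hlen : k ≤ t.children.length) :
    ∃ A M B, Fmap k (.inr (i, t)) = node 0 (A ++ node 1 M :: B) ∧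
      A.length = (i : ℕ) ∧ M ≠ [] ∧
      (∀ x ∈ A, 2 ≤ x.label) ∧ (∀ x ∈ B, 2 ≤ x.label) ∧
      A ++ (M ++ B) = t.children.map inc := by
  obtain ⟨l, cs⟩ := t
  simp only [label_node] at hlab
  subst hlab
  simp only [children_node] at hlen ⊢
  have hfacts := inc_facts hinc
  set CS := cs.map inc with hCS
  set m := CS.length - k + 1 with hm
  have hkj : k ≤ CS.length := by rw [hCS, List.length_map]; omega
  have hik : (i : ℕ) < k := i.2
  refine ⟨CS.take i, (CS.drop i).take m, CS.drop ((i : ℕ) + m), rfl, ?_, ?_, ?_, ?_, ?_⟩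
  · rw [List.length_take]; omega
  · intro h
    have := congrArg List.length h
    rw [List.length_take, List.length_drop, List.length_nil] at this
    omega
  · intro x hx
    exact (hfacts x (List.take_subset _ _ hx)).2.1
  · intro x hx
    exact (hfacts x (List.drop_subset _ _ hx)).2.1
  · rw [← List.drop_drop, List.take_append_drop, List.take_append_drop]

theorem inj_ll {k : ℕ} {t t' : OTree} (h0 : t.label = 0) (h0' : t'.label = 0)
    (h : Fmap k (.inl t) = Fmap k (.inl t')) : t = t' := by
  simp only [Fmap_inl, OTree.node.injEq, List.cons.injEq, true_and] at h
  have := List.map_injective_iff.mpr inc_injective h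
  rw [eta t, eta t', h0, h0', this]

theorem inj_lr {k : ℕ} (hk : 1 ≤ k) {t t' : OTree} (i : Fin k)
    (ht' : t'.Increasing) (h0' : t'.label = 0) (hlen' : k ≤ t'.children.length) :
    Fmap k (.inl t) ≠ Fmap k (.inr (i, t')) := by
  intro h
  obtain ⟨A, M, B, hsh, hAl, hMne, hA2, hB2, hAMB⟩ := inr_shape hk i ht' h0' hlen'
  rw [hsh, Fmap_inl] at h
  simp only [OTree.node.injEq, true_and] at h
  have hsplit := split_unique (A := []) (x := node 1 []) (B := t.children.map inc)
    (by simpa using h) (by simp) (by simp) (by simp) (fun a ha => by have := hA2 a ha; omega)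
  obtain ⟨hAnil, hMeq, -⟩ := hsplit
  apply hMne
  have := hMeq
  simp only [OTree.node.injEq, true_and] at this
  exact this.symm

theorem inj_rr {k : ℕ} (hk : 1 ≤ k) {t t' : OTree} (i i' : Fin k)
    (ht : t.Increasing) (h0 : t.label = 0) (hlen : k ≤ t.children.length)
    (ht' : t'.Increasing) (h0' : t'.label = 0) (hlen' : k ≤ t'.children.length)
    (h : Fmap k (.inr (i, t)) = Fmap k (.inr (i', t'))) : i = i' ∧ t = t' := by
  obtain ⟨A, M, B, hsh, hAl, hMne, hA2, hB2, hAMB⟩ := inr_shape hk i ht h0 hlen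
  obtain ⟨A', M', B', hsh', hAl', hMne', hA2', hB2', hAMB'⟩ := inr_shape hk i' ht' h0' hlen'
  rw [hsh, hsh'] at h
  simp only [OTree.node.injEq, true_and] at h
  obtain ⟨hAA, hMM, hBB⟩ := split_unique h (by simp) (by simp)
    (fun a ha => by have := hA2 a ha; omega)
    (fun a ha => by have := hA2' a ha; omega)
  have hMM' : M = M' := by
    simpa only [OTree.node.injEq, true_and] using hMM
  constructor
  · apply Fin.ext
    rw [← hAl, ← hAl', hAA]
  · have hcc : t.children.map inc = t'.children.map inc := by
      rw [← hAMB, ← hAMB', hAA, hMM', hBB]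
    have := List.map_injective_iff.mpr inc_injective hcc
    rw [eta t, eta t', h0, h0', this]
theorem Fsurj {n k : ℕ} (hn : 2 ≤ n) (hk : 1 ≤ k) {s : OTree} (hs : Good n k s) :
    (∃ t, Good (n - 1) (k - 1) t ∧ Fmap k (.inl t) = s) ∨
    (∃ i : Fin k, ∃ t, GoodGe (n - 1) k t ∧ Fmap k (.inr (i, t)) = s) := by
  obtain ⟨⟨hlab, hperm, hinc⟩, hleaf, hlen⟩ := hs
  obtain ⟨l, ds⟩ := s
  simp only [label_node] at hlab
  subst hlab
  simp only [children_node] at hlen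
  have hinc' := hinc
  have hpos : ∀ c ∈ ds, ∀ v ∈ c.preorder, 1 ≤ v := by
    intro c hc v hv
    simpa using sub_pos hinc' c hc v hv
  cases hinc with
  | node _ _ hroot hsub =>
  have h1 : (1 : ℕ) ∈ (node 0 ds).preorder := hperm.mem_iff.mpr (by
    simp only [List.mem_range]; omega)
  rw [preorder_node] at h1
  have hc : ∃ c ∈ ds, 1 ∈ c.preorder := by
    rcases List.mem_cons.mp h1 with h | h
    · omega
    · simpa using h
  obtain ⟨c, hcds, h1c⟩ := hc
  have hclab : c.label = 1 := by
    have h1l := (hsub c hcds).le_of_mem_preorder 1 h1c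
    have h2l := hroot c hcds
    omega
  obtain ⟨X, Y, hds⟩ := List.append_of_mem hcds
  subst hds
  -- nodup consequences
  have hnodup : (node 0 (X ++ c :: Y)).preorder.Nodup :=
    (hperm.nodup_iff).mpr List.nodup_range
  rw [preorder_node] at hnodup
  have hnd2 := (List.nodup_cons.mp hnodup).2
  have hflat3 : (List.map preorder (X ++ c :: Y)).flatten
      = (X.map preorder).flatten ++ (c.preorder ++ (Y.map preorder).flatten) := by
    simp [List.map_append, List.flatten_append]
  rw [hflat3] at hnd2
  have hpw := List.pairwise_append.mp hnd2
  have hpw2 := List.pairwise_append.mp hpw.2.1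
  have hX1 : ∀ x ∈ X, x.label ≠ 1 := by
    intro x hx heq
    refine hpw.2.2 x.label ?_ 1 (List.mem_append_left _ h1c) heq
    simp only [List.mem_flatten, List.mem_map]
    exact ⟨x.preorder, ⟨x, hx, rfl⟩, label_mem_preorder x⟩
  have hY1 : ∀ y ∈ Y, y.label ≠ 1 := by
    intro y hy heq
    refine (hpw2.2.2 1 h1c y.label ?_) heq.symm
    simp only [List.mem_flatten, List.mem_map]
    exact ⟨y.preorder, ⟨y, hy, rfl⟩, label_mem_preorder y⟩
  have hX2 : ∀ x ∈ X, 2 ≤ x.label := by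
    intro x hx
    have h1x := hroot x (List.mem_append_left _ hx)
    have := hX1 x hx
    omega
  have hY2 : ∀ y ∈ Y, 2 ≤ y.label := by
    intro y hy
    have h1y := hroot y (List.mem_append_right _ (List.mem_cons_of_mem _ hy))
    have := hY1 y hy
    omega
  have hposX : ∀ x ∈ X, ∀ v ∈ x.preorder, 1 ≤ v :=
    fun x hx => hpos x (List.mem_append_left _ hx)
  have hposY : ∀ y ∈ Y, ∀ v ∈ y.preorder, 1 ≤ v :=
    fun y hy => hpos y (List.mem_append_right _ (List.mem_cons_of_mem _ hy))
  obtain ⟨cl, es⟩ := c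
  simp only [label_node] at hclab
  subst hclab
  cases es with
  | nil =>
    -- vertex 1 is a leaf; it must be the first child
    left
    have hXnil : X = [] := by
      cases X with
      | nil => rfl
      | cons x X₂ =>
        exfalso
        have hlv : (node 0 ((x :: X₂) ++ node 1 [] :: Y)).leaves
            = (List.map leaves (x :: X₂)).flatten
              ++ (1 :: (Y.map leaves).flatten) := by
          rw [leaves_node, if_neg (by simp)]
          simp [List.map_append, List.flatten_append]
        rw [HasIncLeaves, hlv] at hleaf
        obtain ⟨v, hv⟩ := List.exists_mem_of_ne_nil _ (leaves_ne_nil x)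
        have hvin : v ∈ (List.map leaves (x :: X₂)).flatten := by
          simp only [List.mem_flatten, List.mem_map]
          exact ⟨x.leaves, ⟨x, by simp, rfl⟩, hv⟩
        have hlt := (List.pairwise_append.mp hleaf).2.2 v hvin 1 (by simp)
        have := hposX x (by simp) v (leaves_subset_preorder x v hv)
        omega
    subst hXnil
    refine ⟨node 0 (Y.map dec), ⟨⟨rfl, ?_, ?_⟩, ?_, ?_⟩, ?_⟩
    · -- perm
      have hperm' : ((0:ℕ) :: 1 :: (Y.map preorder).flatten).Perm
          (List.range (n + 1)) := by
        refine List.Perm.trans ?_ hperm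
        rw [preorder_node]
        simp [List.map_append, List.flatten_append]
      rw [preorder_node, flat_pre_dec, Nat.sub_add_cancel (by omega : 1 ≤ n)]
      rw [← Multiset.coe_eq_coe] at hperm' ⊢
      simp only [← Multiset.cons_coe, ← Multiset.map_coe] at hperm' ⊢
      exact ms_down (by omega) hperm'
    · -- increasing
      refine Increasing.node _ _ ?_ ?_
      · intro y hy
        simp only [List.mem_map] at hy
        obtain ⟨y0, hy0, rfl⟩ := hy
        have := hY2 y0 hy0
        simp only [dec, label_relabel]
        omega
      · intro y hy
        simp only [List.mem_map] at hy
        obtain ⟨y0, hy0, rfl⟩ := hy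
        refine (hsub y0 (List.mem_append_right _ (List.mem_cons_of_mem _ hy0))).relabel _ ?_
        intro a ha b hb hab
        have := hposY y0 hy0 a ha
        omega
    · -- leaves sorted
      have hlvs : (node 0 (([] : List OTree) ++ node 1 [] :: Y)).leaves
          = 1 :: (Y.map leaves).flatten := by
        rw [leaves_node, if_neg (by simp)]
        simp [List.map_append, List.flatten_append]
      rw [HasIncLeaves, hlvs, List.pairwise_cons] at hleaf
      rcases Y with _ | ⟨y0, Y₂⟩
      · simp [HasIncLeaves, leaves_node]
      · rw [HasIncLeaves, leaves_node, if_neg (by simp), flat_lv_dec]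
        refine sorted_map_sub hleaf.2 ?_
        intro v hv
        have := hleaf.1 v hv
        omega
    · -- children length
      simp only [children_node, List.length_map]
      have : ([] ++ OTree.node 1 [] :: Y).length = k := hlen
      simp only [List.nil_append, List.length_cons] at this
      omega
    · -- Fmap equality
      rw [Fmap_inl, children_node, List.map_map]
      have : Y.map (inc ∘ dec) = Y := by
        refine (List.map_congr_left (f := inc ∘ dec) (g := id) fun y hy => ?_).trans
          (List.map_id Y)
        show inc (dec y) = y
        exact inc_dec y (hposY y hy)
      rw [this]
      simp
  | cons e es₂ =>
    -- vertex 1 is internal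
    right
    have hrootc : ∀ x ∈ (e :: es₂), 1 < x.label := by
      cases hsub _ hcds with
      | node _ _ h1 _ => exact h1
    have hsubc : ∀ x ∈ (e :: es₂), x.Increasing := by
      cases hsub _ hcds with
      | node _ _ _ h2 => exact h2
    have hposE : ∀ x ∈ (e :: es₂), ∀ v ∈ x.preorder, 1 ≤ v := by
      intro x hx v hv
      have := sub_pos (hsub _ hcds) x hx v hv
      omega
    set ES := e :: es₂ with hES
    set W := X ++ (ES ++ Y) with hW
    have hWfacts : ∀ w ∈ W, w.Increasing ∧ 2 ≤ w.label ∧ ∀ v ∈ w.preorder, 1 ≤ v := by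
      intro w hw
      rw [hW] at hw
      rcases List.mem_append.mp hw with hw | hw
      · exact ⟨hsub w (List.mem_append_left _ hw), hX2 w hw, hposX w hw⟩
      · rcases List.mem_append.mp hw with hw | hw
        · refine ⟨hsubc w hw, by have := hrootc w hw; omega, hposE w hw⟩
        · exact ⟨hsub w (List.mem_append_right _ (List.mem_cons_of_mem _ hw)),
            hY2 w hw, hposY w hw⟩
    have hXlen : X.length < k := by
      rw [List.length_append, List.length_cons] at hlen
      omega
    have hWlen : W.length = k - 1 + ES.length := by
      rw [hW]
      simp only [List.length_append]
      rw [List.length_append, List.length_cons] at hlen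
      omega
    have hESlen : 1 ≤ ES.length := by rw [hES]; simp
    refine ⟨⟨X.length, hXlen⟩, node 0 (W.map dec), ⟨⟨rfl, ?_, ?_⟩, ?_, ?_⟩, ?_⟩
    · -- perm
      have hperm' : ((0:ℕ) :: 1 :: ((W.map preorder).flatten)).Perm
          (List.range (n + 1)) := by
        refine List.Perm.trans ?_ hperm
        rw [preorder_node]
        refine List.Perm.cons 0 ?_
        have e1 : (List.map preorder (X ++ OTree.node 1 ES :: Y)).flatten
            = (X.map preorder).flatten
              ++ (1 :: ((ES.map preorder).flatten ++ (Y.map preorder).flatten)) := by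
          simp [List.map_append, List.flatten_append, preorder_node]
        rw [e1]
        have e2 : (W.map preorder).flatten
            = (X.map preorder).flatten
              ++ ((ES.map preorder).flatten ++ (Y.map preorder).flatten) := by
          rw [hW]
          simp [List.map_append, List.flatten_append]
        rw [e2]
        exact List.perm_middle.symm
      rw [preorder_node, flat_pre_dec, Nat.sub_add_cancel (by omega : 1 ≤ n)]
      rw [← Multiset.coe_eq_coe] at hperm' ⊢
      simp only [← Multiset.cons_coe, ← Multiset.map_coe] at hperm' ⊢
      exact ms_down (by omega) hperm'
    · -- increasing
      refine Increasing.node _ _ ?_ ?_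
      · intro w hw
        simp only [List.mem_map] at hw
        obtain ⟨w0, hw0, rfl⟩ := hw
        have := (hWfacts w0 hw0).2.1
        simp only [dec, label_relabel]
        omega
      · intro w hw
        simp only [List.mem_map] at hw
        obtain ⟨w0, hw0, rfl⟩ := hw
        refine (hWfacts w0 hw0).1.relabel _ ?_
        intro a ha b hb hab
        have := (hWfacts w0 hw0).2.2 a ha
        omega
    · -- leaves
      have hlv : (node 0 (X ++ OTree.node 1 ES :: Y)).leaves
          = (W.map leaves).flatten := by
        rw [leaves_node, if_neg (by simp)]
        rw [hW]
        simp only [List.map_append, List.flatten_append, List.map_cons, List.flatten_cons,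
          leaves_node]
        rw [if_neg (by rw [hES]; simp)]
      rw [HasIncLeaves, hlv] at hleaf
      have hWne : W ≠ [] := by
        rw [hW, hES]
        simp
      rw [HasIncLeaves, leaves_node, if_neg (by simpa using fun h => hWne (by
        have := congrArg List.length h
        simp only [List.length_map, List.length_nil] at this
        exact List.length_eq_zero_iff.mp this)), flat_lv_dec]
      refine sorted_map_sub hleaf ?_
      intro v hv
      simp only [List.mem_flatten, List.mem_map] at hv
      obtain ⟨_, ⟨w, hw, rfl⟩, hvw⟩ := hv
      exact (hWfacts w hw).2.2 v (leaves_subset_preorder w v hvw)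
    · -- children length
      simp only [children_node, List.length_map]
      omega
    · -- Fmap equality
      have hCS : (node 0 (W.map dec)).children.map inc = W := by
        simp only [children_node, List.map_map]
        refine List.map_congr_left ?_ |>.trans (List.map_id W)
        intro w hw
        exact inc_dec w ((hWfacts w hw).2.2)
      rw [Fmap_inr, hCS]
      have hm : W.length - k + 1 = ES.length := by omega
      rw [hm]
      have h1t : W.take X.length = X := by
        rw [hW]
        exact List.take_left
      have h2t : W.drop X.length = ES ++ Y := by
        rw [hW]
        exact List.drop_left
      have h3t : (ES ++ Y).take ES.length = ES := List.take_left
      have h4t : W.drop (X.length + ES.length) = Y := by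
        rw [hW, ← List.append_assoc]
        refine List.drop_left' ?_
        rw [List.length_append]
      rw [h1t, h2t, h3t, h4t]
theorem len_le_flatten (cs : List OTree) :
    cs.length ≤ ((cs.map preorder).flatten).length := by
  induction cs with
  | nil => simp
  | cons c cs ih =>
    simp only [List.map_cons, List.flatten_cons, List.length_append, List.length_cons]
    have : 0 < c.preorder.length := List.length_pos_iff.mpr (preorder_ne_nil c)
    omega

theorem children_le {m : ℕ} {t : OTree} (h : IsIncOrdTree m t) :
    t.children.length ≤ m := by
  obtain ⟨l, cs⟩ := t
  have hlen := h.2.1.length_eq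
  rw [preorder_node, List.length_cons, List.length_range] at hlen
  have := len_le_flatten cs
  simp only [children_node]
  omega

theorem card_ge (m k : ℕ) :
    Nat.card {t // GoodGe m k t} = ∑ j ∈ Finset.Icc k m, Nat.card {t // Good m j t} := by
  classical
  haveI hfin : ∀ j : ℕ, Finite {t // Good m j t} :=
    fun j => finite_pred m _ (fun t ht => ht.1.2.1)
  haveI : Finite {t // GoodGe m k t} := finite_pred m _ (fun t ht => ht.1.2.1)
  have e : {t // GoodGe m k t} ≃
      Σ j : (Finset.Icc k m : Finset ℕ), {t // Good m (j : ℕ) t} :=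
    { toFun := fun x => ⟨⟨x.1.children.length, by
        rw [Finset.mem_Icc]
        exact ⟨x.2.2.2, children_le x.2.1⟩⟩, ⟨x.1, ⟨x.2.1, x.2.2.1, rfl⟩⟩⟩
      invFun := fun x => ⟨x.2.1, ⟨x.2.2.1, x.2.2.2.1, by
        rw [x.2.2.2.2]
        exact (Finset.mem_Icc.mp x.1.2).1⟩⟩
      left_inv := fun x => rfl
      right_inv := by
        rintro ⟨⟨j, hj⟩, ⟨t, ht⟩⟩
        have h3 : t.children.length = j := ht.2.2
        subst h3
        rfl }
  rw [Nat.card_congr e]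
  letI : ∀ j : (Finset.Icc k m : Finset ℕ), Fintype {t // Good m (j : ℕ) t} :=
    fun j => Fintype.ofFinite _
  rw [Nat.card_eq_fintype_card, Fintype.card_sigma]
  rw [← Finset.sum_coe_sort (Finset.Icc k m) (fun j => Nat.card {t // Good m j t})]
  exact Finset.sum_congr rfl fun j _ => (Nat.card_eq_fintype_card).symm

theorem card_a_zero {n : ℕ} (hn : 2 ≤ n) : Nat.card {t // Good (n - 1) 0 t} = 0 := by
  have : IsEmpty {t // Good (n - 1) 0 t} := by
    constructor
    rintro ⟨t, ⟨hio, hlv, hlen⟩⟩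
    obtain ⟨l, cs⟩ := t
    simp only [children_node] at hlen
    rw [List.length_eq_zero_iff] at hlen
    subst hlen
    have := hio.2.1.length_eq
    rw [preorder_node, List.length_range] at this
    simp only [List.map_nil, List.flatten_nil, List.length_cons, List.length_nil] at this
    omega
  exact Nat.card_of_isEmpty

theorem base_case : ∀ t : OTree, Good 1 1 t ↔ t = node 0 [node 1 []] := by
  intro t
  constructor
  · rintro ⟨⟨hlab, hperm, hinc⟩, hlv, hlen⟩
    obtain ⟨l, cs⟩ := t
    simp only [label_node] at hlab
    subst hlab
    simp only [children_node] at hlen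
    have hflat : ((cs.map preorder).flatten).Perm [1] := by
      rw [preorder_node, show List.range 2 = [0, 1] from rfl] at hperm
      exact (List.perm_cons 0).mp hperm
    rcases cs with _ | ⟨c, cs₂⟩
    · simp at hlen
    rcases cs₂ with _ | ⟨c₂, cs₃⟩
    swap
    · simp at hlen
    simp only [List.map_cons, List.map_nil, List.flatten_cons, List.flatten_nil,
      List.append_nil] at hflat
    have hc : c.preorder = [1] := List.perm_singleton.mp hflat
    obtain ⟨cl, ccs⟩ := c
    rw [preorder_node] at hc
    simp only [List.cons.injEq] at hc
    obtain ⟨rfl, hc2⟩ := hc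
    have : ccs = [] := by
      rcases ccs with _ | ⟨d, ds⟩
      · rfl
      · exfalso
        simp only [List.map_cons, List.flatten_cons] at hc2
        have := preorder_ne_nil d
        rcases h : d.preorder with _ | _
        · exact this h
        · rw [h] at hc2; simp at hc2
    subst this
    rfl
  · rintro rfl
    refine ⟨⟨rfl, ?_, ?_⟩, ?_, ?_⟩
    · simp only [preorder_node, List.map_cons, List.map_nil, List.flatten_cons,
        List.flatten_nil, List.append_nil]
      have : List.range 2 = [0, 1] := rfl
      rw [this]
    · exact Increasing.node _ _ (by simp) (by
        rintro x hx
        rcases List.mem_singleton.mp hx with rfl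
        exact Increasing.node _ _ (by simp) (by simp))
    · rw [HasIncLeaves, leaves_node, if_neg (by simp)]
      simp [leaves_node]
    · simp
theorem main_count (u : ℕ → ℕ → ℕ) (hu0 : u 0 0 = 1)
    (hu1 : ∀ n : ℕ, 1 ≤ n → u n 0 = 0)
    (hrec : ∀ n k : ℕ, 1 ≤ k → k ≤ n →
      u n k = u (n - 1) (k - 1) + k * ∑ j ∈ Finset.Icc k (n - 1), u (n - 1) j) :
    ∀ n, 1 ≤ n → ∀ k, 1 ≤ k → k ≤ n → Nat.card {t // Good n k t} = u n k := by
  intro n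
  induction n using Nat.strong_induction_on with
  | _ n ih =>
    intro hn k hk hkn
    rcases eq_or_lt_of_le hn with h1 | h2
    · -- base case n = 1
      have hn1 : n = 1 := h1.symm
      subst hn1
      have hk1 : k = 1 := by omega
      subst hk1
      have hu11 : u 1 1 = 1 := by
        rw [hrec 1 1 le_rfl le_rfl]
        rw [Finset.Icc_eq_empty (by omega)]
        simp [hu0]
      rw [hu11]
      have e : {t // Good 1 1 t} ≃ PUnit.{1} :=
        { toFun := fun _ => PUnit.unit
          invFun := fun _ => ⟨node 0 [node 1 []], (base_case _).mpr rfl⟩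
          left_inv := fun x => Subtype.ext (by rw [(base_case x.1).mp x.2])
          right_inv := fun _ => rfl }
      rw [Nat.card_congr e]
      exact Nat.card_unique
    · -- inductive step, n ≥ 2
      have hn2 : 2 ≤ n := h2
      haveI finA : Finite {t // Good (n - 1) (k - 1) t} :=
        finite_pred (n - 1) _ (fun t ht => ht.1.2.1)
      haveI finB : Finite {t // GoodGe (n - 1) k t} :=
        finite_pred (n - 1) _ (fun t ht => ht.1.2.1)
      set G : {t // Good (n - 1) (k - 1) t} ⊕ (Fin k × {t // GoodGe (n - 1) k t})
          → {t // Good n k t} := fun x =>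
        match x with
        | .inl ⟨t, ht⟩ => ⟨Fmap k (.inl t), wd_inl hn2 hk ht⟩
        | .inr (i, ⟨t, ht⟩) => ⟨Fmap k (.inr (i, t)), wd_inr hn2 hk i ht⟩
        with hG
      have hbij : Function.Bijective G := by
        constructor
        · rintro (⟨t, ht⟩ | ⟨i, ⟨t, ht⟩⟩) (⟨t', ht'⟩ | ⟨i', ⟨t', ht'⟩⟩) h <;>
            rw [hG] at h <;> simp only [Subtype.mk.injEq] at h
          · exact congrArg Sum.inl (Subtype.ext (inj_ll ht.1.1 ht'.1.1 h))
          · exact absurd h (inj_lr hk i' ht'.1.2.2 ht'.1.1 ht'.2.2)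
          · exact absurd h.symm (inj_lr hk i ht.1.2.2 ht.1.1 ht.2.2)
          · obtain ⟨hii, htt⟩ := inj_rr hk i i' ht.1.2.2 ht.1.1 ht.2.2
              ht'.1.2.2 ht'.1.1 ht'.2.2 h
            subst hii
            exact congrArg Sum.inr (congrArg (Prod.mk i) (Subtype.ext htt))
        · rintro ⟨s, hs⟩
          rcases Fsurj hn2 hk hs with ⟨t, ht, heq⟩ | ⟨i, t, ht, heq⟩
          · exact ⟨.inl ⟨t, ht⟩, Subtype.ext heq⟩
          · exact ⟨.inr (i, ⟨t, ht⟩), Subtype.ext heq⟩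
      have hcard := Nat.card_congr (Equiv.ofBijective G hbij)
      rw [← hcard, Nat.card_sum, Nat.card_prod, Nat.card_eq_fintype_card (α := Fin k),
        Fintype.card_fin, card_ge]
      -- now compute the two pieces
      have hA : Nat.card {t // Good (n - 1) (k - 1) t} = u (n - 1) (k - 1) := by
        rcases eq_or_lt_of_le hk with hk1 | hk2
        · rw [← hk1]
          simp only [Nat.sub_self]
          rw [card_a_zero hn2, hu1 (n - 1) (by omega)]
        · exact ih (n - 1) (by omega) (by omega) (k - 1) (by omega) (by omega)
      have hB : ∑ j ∈ Finset.Icc k (n - 1), Nat.card {t // Good (n - 1) j t}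
          = ∑ j ∈ Finset.Icc k (n - 1), u (n - 1) j := by
        refine Finset.sum_congr rfl fun j hj => ?_
        rw [Finset.mem_Icc] at hj
        exact ih (n - 1) (by omega) (by omega) j (by omega) hj.2
      rw [hA, hB, hrec n k hk hkn]

end OTree

theorem stmt1 (u : ℕ → ℕ → ℕ) (hu0 : u 0 0 = 1)
    (hu1 : ∀ n : ℕ, 1 ≤ n → u n 0 = 0)
    (hrec : ∀ n k : ℕ, 1 ≤ k → k ≤ n →
      u n k = u (n - 1) (k - 1) + k * ∑ j ∈ Finset.Icc k (n - 1), u (n - 1) j)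
    (n k : ℕ) (hn : 1 ≤ n) (hk : 1 ≤ k) (hkn : k ≤ n) :
    Nat.card {t : OTree //
        IsIncOrdTree n t ∧ HasIncLeaves t ∧ t.children.length = k}
      = u n k := by
  exact OTree.main_count u hu0 hu1 hrec n hn k hk hkn
end

section
/- For all n ≥ 1, the number of Stirling permutations of size n equals the odd double factorial (2n-1)!! = 1·3·5···(2n-1). -/
/-- `l` is a permutation (as a sequence) of the multiset `{1,1,2,2,...,n,n}`. -/
def IsDoubleMultiset (n : ℕ) (l : List ℕ) : Prop :=
  ∀ i : ℕ, l.count i = if 1 ≤ i ∧ i ≤ n then 2 else 0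

/-- A Stirling permutation of size `n`: a permutation of `{1,1,2,2,...,n,n}`
such that every entry lying strictly between the two (equal) occurrences of a
value exceeds that value. -/
def IsStirlingPerm (n : ℕ) (l : List ℕ) : Prop :=
  IsDoubleMultiset n l ∧
    ∀ a b c : Fin l.length, a < b → b < c → l.get a = l.get c →
      l.get a < l.get b

/-- A Gessel permutation of size `n`: a permutation of `{1,1,2,2,...,n,n}` in
which the second occurrence of each value is a right-to-left minimum
(equivalently, the second occurrences of `1,2,...,n` appear in that order). -/
def IsGesselPerm (n : ℕ) (l : List ℕ) : Prop :=
  IsDoubleMultiset n l ∧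
    ∀ a c d : Fin l.length, a < c → l.get a = l.get c → c < d →
      l.get c < l.get d


open List

-- membership bound
lemma dm_mem {n : ℕ} {l : List ℕ} (h : IsDoubleMultiset n l) {v : ℕ} (hv : v ∈ l) :
    1 ≤ v ∧ v ≤ n := by
  have h1 : 0 < l.count v := List.count_pos_iff.mpr hv
  have h2 := h v
  by_contra hc
  rw [if_neg hc] at h2
  omega

lemma dm_length {n : ℕ} {l : List ℕ} (h : IsDoubleMultiset n l) : l.length = 2 * n := by
  have h1 : ∀ a ∈ (l : Multiset ℕ), a ∈ Finset.Icc 1 n := by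
    intro a ha
    simp only [Multiset.mem_coe] at ha
    have := dm_mem h ha
    simp [Finset.mem_Icc]; omega
  have h2 := Multiset.sum_count_eq_card h1
  simp only [Multiset.coe_count, Multiset.coe_card] at h2
  have h3 : ∑ a ∈ Finset.Icc 1 n, l.count a = ∑ a ∈ Finset.Icc 1 n, 2 := by
    apply Finset.sum_congr rfl
    intro a ha
    rw [h a, if_pos]
    simpa [Finset.mem_Icc] using ha
  rw [h3] at h2
  rw [Finset.sum_const, smul_eq_mul, Nat.card_Icc] at h2
  omega

lemma get_sublist3 {α : Type*} (l : List α) (a b c : Fin l.length) (hab : a < b) (hbc : b < c) :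
    [l.get a, l.get b, l.get c] <+ l := by
  rw [List.sublist_iff_exists_fin_orderEmbedding_get_eq]
  refine ⟨OrderEmbedding.ofStrictMono (fun i => if i.1 = 0 then a else if i.1 = 1 then b else c) ?_, ?_⟩
  · intro i j hij
    fin_cases i <;> fin_cases j <;> simp_all <;>
      first
        | exact hab | exact hbc | exact hab.trans hbc
        | exact absurd hij (by omega)
  · intro ix; fin_cases ix <;> simp

lemma sp_iff (n : ℕ) (l : List ℕ) :
    IsStirlingPerm n l ↔ IsDoubleMultiset n l ∧ ∀ v w : ℕ, [v, w, v] <+ l → v < w := by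
  constructor
  · rintro ⟨hdm, hidx⟩
    refine ⟨hdm, fun v w hs => ?_⟩
    obtain ⟨f, hf⟩ := List.sublist_iff_exists_fin_orderEmbedding_get_eq.mp hs
    have h0 := hf ⟨0, by norm_num⟩
    have h1 := hf ⟨1, by norm_num⟩
    have h2 := hf ⟨2, by norm_num⟩
    simp only [List.get] at h0 h1 h2
    have hab : f ⟨0, by norm_num⟩ < f ⟨1, by norm_num⟩ := f.strictMono (show (⟨0, by norm_num⟩ : Fin ([v,w,v].length)) < ⟨1, by norm_num⟩ by simp [Fin.lt_def])
    have hbc : f ⟨1, by norm_num⟩ < f ⟨2, by norm_num⟩ := f.strictMono (show (⟨1, by norm_num⟩ : Fin ([v,w,v].length)) < ⟨2, by norm_num⟩ by simp [Fin.lt_def])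
    have := hidx _ _ _ hab hbc (by rw [← h0, ← h2])
    rw [← h0, ← h1] at this
    exact this
  · rintro ⟨hdm, hsub⟩
    refine ⟨hdm, fun a b c hab hbc heq => ?_⟩
    have := hsub (l.get a) (l.get b) (by
      have := get_sublist3 l a b c hab hbc
      rwa [← heq] at this)
    exact this

lemma first_occ {α : Type*} {m : α} {l : List α} (h : m ∈ l) :
    ∃ s t, l = s ++ m :: t ∧ m ∉ s := by
  induction l with
  | nil => cases h
  | cons a l ih =>
    by_cases ha : a = m
    · exact ⟨[], l, by simp [ha], by simp⟩
    · have h' : m ∈ l := by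
        rcases List.mem_cons.mp h with h | h
        · exact absurd h.symm ha
        · exact h
      obtain ⟨s, t, rfl, hs⟩ := ih h'
      refine ⟨a :: s, t, rfl, ?_⟩
      simp only [List.mem_cons, not_or]
      exact ⟨fun e => ha e.symm, hs⟩

lemma decomp_unique {α : Type*} {m : α} :
    ∀ {a : List α} {a' b b' : List α}, m ∉ a → m ∉ a' →
      a ++ m :: m :: b = a' ++ m :: m :: b' → a = a' ∧ b = b' := by
  intro a
  induction a with
  | nil =>
    intro a' b b' _ ha' he
    cases a' with
    | nil => simpa using he
    | cons x a' =>
      injection he with h1 h2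
      exact absurd (h1 ▸ (List.mem_cons_self : x ∈ x :: a')) ha'
  | cons x a ih =>
    intro a' b b' ha ha' he
    cases a' with
    | nil =>
      injection he with h1 h2
      exact absurd (h1 ▸ (List.mem_cons_self : x ∈ x :: a)) ha
    | cons y a' =>
      injection he with h1 h2
      have hm : m ∉ a := fun h => ha (List.mem_cons_of_mem _ h)
      have hm' : m ∉ a' := fun h => ha' (List.mem_cons_of_mem _ h)
      obtain ⟨e1, e2⟩ := ih hm hm' h2
      exact ⟨by rw [h1, e1], e2⟩

lemma sp_decomp {n : ℕ} {l : List ℕ} (h : IsStirlingPerm (n+1) l) :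
    ∃ l1 l2, l = l1 ++ (n+1) :: (n+1) :: l2 ∧ (n+1) ∉ l1 ∧ (n+1) ∉ l2 := by
  obtain ⟨hdm, hsub⟩ := (sp_iff _ _).mp h
  set m := n + 1 with hm
  have hcount : l.count m = 2 := by rw [hdm m, if_pos (by omega)]
  have hmem : m ∈ l := List.count_pos_iff.mp (by omega)
  obtain ⟨s, t, rfl, hs⟩ := first_occ hmem
  have hcs : (s ++ m :: t).count m = s.count m + (t.count m + 1) := by
    simp [List.count_append, List.count_cons]
  have hs0 : s.count m = 0 := List.count_eq_zero.mpr hs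
  have ht1 : t.count m = 1 := by omega
  have hmt : m ∈ t := List.count_pos_iff.mp (by omega)
  obtain ⟨u, r, rfl, hu⟩ := first_occ hmt
  -- claim u = []
  cases u with
  | cons a u' =>
    exfalso
    have hsub3 : [m, a, m] <+ s ++ m :: (a :: u' ++ m :: r) := by
      apply List.sublist_append_of_sublist_right
      apply List.cons_sublist_cons.mpr
      apply List.cons_sublist_cons.mpr
      apply List.singleton_sublist.mpr
      exact List.mem_append_right _ List.mem_cons_self
    have hlt : m < a := hsub m a hsub3
    have hamem : a ∈ s ++ m :: (a :: u' ++ m :: r) := by simp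
    have := dm_mem hdm hamem
    omega
  | nil =>
    refine ⟨s, r, by simp, hs, ?_⟩
    have : (s ++ m :: ([] ++ m :: r)).count m
        = s.count m + r.count m + 2 := by
      simp [List.count_append, List.count_cons]; omega
    intro hmr
    have := List.count_pos_iff.mpr hmr
    omega

lemma sp_insert {n : ℕ} {l1 l2 : List ℕ} (h : IsStirlingPerm n (l1 ++ l2)) :
    IsStirlingPerm (n+1) (l1 ++ (n+1) :: (n+1) :: l2) := by
  obtain ⟨hdm, hsub⟩ := (sp_iff _ _).mp h
  set m := n + 1 with hm
  have hml : m ∉ l1 ++ l2 := by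
    intro hmem
    have := dm_mem hdm hmem
    omega
  have hml1 : m ∉ l1 := fun h' => hml (List.mem_append_left _ h')
  have hml2 : m ∉ l2 := fun h' => hml (List.mem_append_right _ h')
  rw [sp_iff]
  constructor
  · intro i
    have hc := hdm i
    have : (l1 ++ m :: m :: l2).count i
        = (l1 ++ l2).count i + (if m = i then 2 else 0) := by
      simp [List.count_append, List.count_cons]
      split_ifs <;> omega
    rw [this, hc]
    split_ifs <;> omega
  · intro v w hs
    by_cases hv : v = m
    · subst hv
      -- impossible: derive contradiction, get m < w and w ≤ m? No: show m < w is the goal!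
      exfalso
      rw [List.sublist_append_iff] at hs
      obtain ⟨s, t, he, hsl1, htl2⟩ := hs
      have hms : m ∉ s := fun h' => hml1 (hsl1.subset h')
      cases s with
      | cons x s' =>
        injection he with h1 _
        exact hms (h1 ▸ (List.mem_cons_self : x ∈ x :: s'))
      | nil =>
        simp only [List.nil_append] at he
        subst he
        rw [show (m :: m :: l2 : List ℕ) = [m, m] ++ l2 by rfl, List.sublist_append_iff] at htl2
        obtain ⟨u, v', he2, hu, hv'⟩ := htl2
        have hmv' : m ∉ v' := fun h' => hml2 (hv'.subset h')
        have hcv' : v'.count m = 0 := List.count_eq_zero.mpr hmv'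
        by_cases hw : w = m
        · subst hw
          have hcu : u.count m + v'.count m = 3 := by
            rw [← List.count_append, ← he2]; simp [List.count_cons]
          have h1 := (List.count_le_length : u.count m ≤ u.length)
          have h2 := hu.length_le
          simp only [List.length_cons, List.length_nil] at h2
          omega
        · have hcnt : ([m,w,m] : List ℕ).count m = 2 := by
            simp [List.count_cons, hw]
          have : u.count m + v'.count m = 2 := by
            rw [← List.count_append, ← he2, hcnt]
          have h1 := (List.count_le_length : u.count m ≤ u.length)
          have hue : u = [m, m] := hu.eq_of_length_le (by
            simp only [List.length_cons, List.length_nil]; omega)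
          rw [hue] at he2
          simp only [List.cons_append, List.nil_append] at he2
          injection he2 with e1 e2
          injection e2 with e3 e4
          exact hw e3
    · have hvmem : v ∈ l1 ++ l2 := by
        have : v ∈ l1 ++ m :: m :: l2 := hs.subset (by simp)
        rcases List.mem_append.mp this with h' | h'
        · exact List.mem_append_left _ h'
        · rcases List.mem_cons.mp h' with h'' | h''
          · exact absurd h'' hv
          · rcases List.mem_cons.mp h'' with h3 | h3
            · exact absurd h3 hv
            · exact List.mem_append_right _ h3
      by_cases hw : w = m
      · subst hw
        have := dm_mem hdm hvmem
        omega
      · have hfil := hs.filter (fun x => decide (x ≠ m))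
        have hfl : ([v, w, v] : List ℕ).filter (fun x => decide (x ≠ m)) = [v, w, v] := by
          simp [List.filter, hv, hw]
        have hfr : (l1 ++ m :: m :: l2).filter (fun x => decide (x ≠ m))
            = l1.filter (fun x => decide (x ≠ m)) ++ l2.filter (fun x => decide (x ≠ m)) := by
          simp [List.filter_append, List.filter_cons]
        rw [hfl, hfr] at hfil
        have : [v, w, v] <+ l1 ++ l2 :=
          hfil.trans (List.Sublist.append List.filter_sublist List.filter_sublist)
        exact hsub v w this

lemma sp_remove {n : ℕ} {l1 l2 : List ℕ}
    (h : IsStirlingPerm (n+1) (l1 ++ (n+1) :: (n+1) :: l2))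
    (h1 : (n+1) ∉ l1) (h2 : (n+1) ∉ l2) : IsStirlingPerm n (l1 ++ l2) := by
  obtain ⟨hdm, hsub⟩ := (sp_iff _ _).mp h
  set m := n + 1 with hm
  rw [sp_iff]
  constructor
  · intro i
    have hc := hdm i
    have hx : (l1 ++ m :: m :: l2).count i
        = (l1 ++ l2).count i + (if m = i then 2 else 0) := by
      simp [List.count_append, List.count_cons]
      split_ifs <;> omega
    rw [hx] at hc
    by_cases hi : i = m
    · subst hi
      have z1 : l1.count m = 0 := List.count_eq_zero.mpr h1
      have z2 : l2.count m = 0 := List.count_eq_zero.mpr h2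
      rw [List.count_append]
      rw [z1, z2, if_neg (by omega)]
    · rw [if_neg (fun e => hi e.symm)] at hc
      split_ifs at hc ⊢ <;> omega
  · intro v w hs
    have hs' : [v, w, v] <+ l1 ++ m :: m :: l2 := by
      refine hs.trans ?_
      rw [List.append_sublist_append_left]
      exact (List.sublist_cons_self _ _).trans (List.sublist_cons_self _ _)
    exact hsub v w hs'

noncomputable def spFwd (n : ℕ) (x : {l : List ℕ // IsStirlingPerm (n+1) l}) :
    {l : List ℕ // IsStirlingPerm n l} × Fin (2 * n + 1) :=
  let l1 := (sp_decomp x.2).choose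
  let hd := (sp_decomp x.2).choose_spec
  let l2 := hd.choose
  let hspec := hd.choose_spec
  have hsp : IsStirlingPerm n (l1 ++ l2) :=
    sp_remove (hspec.1 ▸ x.2) hspec.2.1 hspec.2.2
  have hlen : (l1 ++ l2).length = 2 * n := dm_length hsp.1
  ⟨⟨l1 ++ l2, hsp⟩, ⟨l1.length, by
    simp only [List.length_append] at hlen; omega⟩⟩

noncomputable def spBwd (n : ℕ) (y : {l : List ℕ // IsStirlingPerm n l} × Fin (2 * n + 1)) :
    {l : List ℕ // IsStirlingPerm (n+1) l} :=
  ⟨y.1.1.take y.2.1 ++ (n+1) :: (n+1) :: y.1.1.drop y.2.1, by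
    have := sp_insert (n := n) (l1 := y.1.1.take y.2.1) (l2 := y.1.1.drop y.2.1)
      (by rw [List.take_append_drop]; exact y.1.2)
    exact this⟩

lemma sp_left_inv (n : ℕ) : Function.LeftInverse (spBwd n) (spFwd n) := by
  intro x
  apply Subtype.ext
  show _ ++ _ :: _ :: _ = x.1
  set l1 := (sp_decomp x.2).choose
  set hd := (sp_decomp x.2).choose_spec
  set l2 := hd.choose
  have hspec := hd.choose_spec
  show (l1 ++ l2).take l1.length ++ (n+1) :: (n+1) :: (l1 ++ l2).drop l1.length = x.1
  rw [List.take_left, List.drop_left]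
  exact hspec.1.symm

lemma sp_right_inv (n : ℕ) : Function.RightInverse (spBwd n) (spFwd n) := by
  intro y
  obtain ⟨⟨l', hl'⟩, k⟩ := y
  have hlen : l'.length = 2 * n := dm_length hl'.1
  have hk : k.1 ≤ l'.length := by rw [hlen]; omega
  have hml' : (n+1) ∉ l' := by
    intro hmem
    have := dm_mem hl'.1 hmem
    omega
  have hmt : (n+1) ∉ l'.take k.1 := fun h => hml' ((List.take_sublist _ _).subset h)
  have hmd : (n+1) ∉ l'.drop k.1 := fun h => hml' ((List.drop_sublist _ _).subset h)
  -- spBwd y = ⟨take ++ m::m::drop, _⟩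
  set L : List ℕ := l'.take k.1 ++ (n+1) :: (n+1) :: l'.drop k.1 with hL
  have hx2 : IsStirlingPerm (n+1) L := (spBwd n (⟨l', hl'⟩, k)).2
  -- the chosen decomposition of L
  have hspec := (sp_decomp hx2).choose_spec.choose_spec
  obtain ⟨he, hna, hnb⟩ := hspec
  have huniq := decomp_unique hna hmt he.symm
  have e1 : (sp_decomp hx2).choose = l'.take k.1 := huniq.1
  have e2 : (sp_decomp hx2).choose_spec.choose = l'.drop k.1 := huniq.2
  show spFwd n (spBwd n (⟨l', hl'⟩, k)) = (⟨l', hl'⟩, k)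
  have : spFwd n (spBwd n (⟨l', hl'⟩, k))
      = ⟨⟨(sp_decomp hx2).choose ++ (sp_decomp hx2).choose_spec.choose, _⟩,
          ⟨(sp_decomp hx2).choose.length, _⟩⟩ := rfl
  rw [this]
  refine Prod.ext ?_ ?_
  · apply Subtype.ext
    show (sp_decomp hx2).choose ++ (sp_decomp hx2).choose_spec.choose = l'
    rw [e2, e1, List.take_append_drop]
  · apply Fin.ext
    show (sp_decomp hx2).choose.length = k.1
    rw [e1, List.length_take]
    omega

lemma sp_card : ∀ n : ℕ, Nat.card {l : List ℕ // IsStirlingPerm n l}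
    = Nat.doubleFactorial (2 * n - 1) := by
  intro n
  induction n with
  | zero =>
    have hnil : IsStirlingPerm 0 [] := by
      refine ⟨fun i => by rw [List.count_nil, if_neg (by omega)], ?_⟩
      intro a b c _ _ _
      exact absurd a.isLt (by simp)
    have huniq : ∀ l : List ℕ, IsStirlingPerm 0 l → l = [] := by
      intro l hl
      rcases l with _ | ⟨a, l⟩
      · rfl
      · exfalso
        have := dm_mem hl.1 (List.mem_cons_self : a ∈ a :: l)
        omega
    have : Nat.card {l : List ℕ // IsStirlingPerm 0 l} = 1 := by
      rw [Nat.card_eq_one_iff_unique]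
      constructor
      · constructor
        intro x y
        apply Subtype.ext
        rw [huniq x.1 x.2, huniq y.1 y.2]
      · exact ⟨⟨[], hnil⟩⟩
    rw [this]
    rfl
  | succ n ih =>
    have he : {l : List ℕ // IsStirlingPerm (n+1) l}
        ≃ ({l : List ℕ // IsStirlingPerm n l} × Fin (2*n+1)) :=
      ⟨spFwd n, spBwd n, sp_left_inv n, sp_right_inv n⟩
    rw [Nat.card_congr he, Nat.card_prod, ih, Nat.card_eq_fintype_card, Fintype.card_fin]
    cases n with
    | zero => rfl
    | succ k =>
      have h1 : 2 * (k+1+1) - 1 = (2*(k+1)-1) + 2 := by omega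
      rw [h1, Nat.doubleFactorial_add_two]
      have h2 : (2*(k+1)-1) + 2 = 2*(k+1) + 1 := by omega
      rw [h2]
      ring

theorem stmt4 (n : ℕ) (hn : 1 ≤ n) :
    Nat.card {l : List ℕ // IsStirlingPerm n l}
      = Nat.doubleFactorial (2 * n - 1) :=
  sp_card n
end

section
/- A permutation p of {1,...,n} is (1-23-4)-avoiding if and only if every free ascent of p terminates at a right-to-left maximum, i.e., for every position b with p(b) < p(b+1) such that p(b) is not a left-to-right minimum of p, the entry p(b+1) satisfies p(c) < p(b+1) for all c > b+1. -/
/-- A permutation `p` of `{1,...,n}` (positions `Fin n`) contains the dashed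
pattern 1-23-4: there are positions `a < b`, `b' = b+1`, `c > b'` with
`p a < p b < p b' < p c`. -/
def Contains1234 {n : ℕ} (p : Equiv.Perm (Fin n)) : Prop :=
  ∃ a b b' c : Fin n, a < b ∧ (b' : ℕ) = (b : ℕ) + 1 ∧ b' < c ∧
    p a < p b ∧ p b < p b' ∧ p b' < p c

/-- The entry `p b` is a left-to-right minimum: every earlier entry is larger. -/
def IsLRMin {n : ℕ} (p : Equiv.Perm (Fin n)) (b : Fin n) : Prop :=
  ∀ a : Fin n, a < b → p b < p a

/-- The entry `p c` is a right-to-left maximum: every later entry is smaller. -/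
def IsRLMax {n : ℕ} (p : Equiv.Perm (Fin n)) (c : Fin n) : Prop :=
  ∀ d : Fin n, c < d → p d < p c

theorem stmt8 (n : ℕ) (hn : 1 ≤ n) (p : Equiv.Perm (Fin n)) :
    ¬ Contains1234 p ↔
      ∀ b b' : Fin n, (b' : ℕ) = (b : ℕ) + 1 → p b < p b' →
        ¬ IsLRMin p b → IsRLMax p b' := by
  constructor
  · intro hav b b' hb hasc hmin d hd
    by_contra hle
    push_neg at hle
    obtain ⟨a, ha, hpa⟩ := by
      simpa [IsLRMin] using hmin
    have hab : p a < p b := lt_of_le_of_ne hpa (by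
      intro h; exact absurd (p.injective h) (ne_of_lt ha))
    have hbd : p b' < p d := lt_of_le_of_ne hle (by
      intro h; exact absurd (p.injective h) (ne_of_lt hd))
    exact hav ⟨a, b, b', d, ha, hb, hd, hab, hasc, hbd⟩
  · rintro h ⟨a, b, b', c, hab, hb, hbc, h1, h2, h3⟩
    have hmin : ¬ IsLRMin p b := by
      intro hm; exact absurd h1 (not_lt.2 (hm a hab).le)
    exact absurd h3 (not_lt.2 (h b b' hb h2 hmin c hbc).le)
end

section
/- For all n ≥ 1 and 1 ≤ k ≤ n, the number of valley-marked Dyck paths of semilength n whose first ascent has length k equals u(n,k), where u(n,k) is defined by u(0,0) = 1, u(n,0) = 0 for n ≥ 1, and u(n,k) = u(n-1,k-1) + k·Σ_{j=k}^{n-1} u(n-1,j) for 1 ≤ k ≤ n. -/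
/-- A Dyck path of semilength `n`, encoded as a list of booleans where `true`
is an up-step `U = (1,1)` and `false` is a down-step `D = (1,-1)`: it has `2n`
steps, never goes below the x-axis, and ends on the x-axis. -/
def IsDyckPath (n : ℕ) (p : List Bool) : Prop :=
  p.length = 2 * n ∧
    (∀ i : ℕ, (p.take i).count false ≤ (p.take i).count true) ∧
    p.count false = p.count true

/-- The height of the lattice point reached after the first `j` steps. -/
def pathHeight (p : List Bool) (j : ℕ) : ℕ :=
  (p.take j).count true - (p.take j).count false

/-- There is a valley (a `D` step immediately followed by a `U` step) at
position `i`; its valley vertex is the point reached after `i+1` steps. -/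
def IsValley (p : List Bool) (i : ℕ) : Prop :=
  p[i]? = some false ∧ p[i + 1]? = some true

/-- A valley-marking of the path `p`: for each valley, a choice of one of the
lattice points between the valley vertex and the x-axis inclusive, i.e. an
integer mark `m` with `0 ≤ m ≤` the height of the valley vertex (and, for
bookkeeping, the mark is `0` at non-valley positions). -/
def IsValleyMarking (p : List Bool) (m : ℕ → ℕ) : Prop :=
  ∀ i : ℕ, (IsValley p i → m i ≤ pathHeight p (i + 1)) ∧
    (¬ IsValley p i → m i = 0)

/-- The length of the first ascent: the initial maximal run of `U` steps. -/
def firstAscentLength (p : List Bool) : ℕ :=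
  (p.takeWhile id).length

namespace VM

/-! ### first ascent basics -/

lemma fal_nil : firstAscentLength [] = 0 := rfl

lemma fal_cons (b : Bool) (l : List Bool) :
    firstAscentLength (b :: l) = if b then firstAscentLength l + 1 else 0 := by
  cases b <;> simp [firstAscentLength, List.takeWhile_cons]

lemma take_fal (p : List Bool) :
    p.take (firstAscentLength p) = List.replicate (firstAscentLength p) true := by
  induction p with
  | nil => simp [fal_nil]
  | cons b l ih =>
    cases b with
    | false => simp [fal_cons]
    | true => simp [fal_cons, ih, List.replicate_succ]

lemma getElem?_lt_fal {p : List Bool} {i : ℕ} (h : i < firstAscentLength p) :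
    p[i]? = some true := by
  induction p generalizing i with
  | nil => simp [fal_nil] at h
  | cons b l ih =>
    cases b with
    | false => simp [fal_cons] at h
    | true =>
      rw [fal_cons] at h
      cases i with
      | zero => simp
      | succ j => simpa using ih (by simpa using h)

lemma fal_getElem?_ne (p : List Bool) : p[firstAscentLength p]? ≠ some true := by
  induction p with
  | nil => simp [fal_nil]
  | cons b l ih =>
    cases b with
    | false => simp [fal_cons]
    | true => rw [fal_cons]; simpa using ih

lemma le_fal {p : List Bool} {k : ℕ} (h : ∀ i < k, p[i]? = some true) :
    k ≤ firstAscentLength p := by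
  by_contra hc
  exact fal_getElem?_ne p (h _ (by omega))

lemma fal_eq {p : List Bool} {k : ℕ} (h1 : ∀ i < k, p[i]? = some true)
    (h2 : p[k]? ≠ some true) : firstAscentLength p = k := by
  rcases lt_trichotomy (firstAscentLength p) k with h | h | h
  · exact absurd (h1 _ h) (fal_getElem?_ne p)
  · exact h
  · exact absurd (getElem?_lt_fal h) h2

lemma count_bool (l : List Bool) : l.count false + l.count true = l.length := by
  induction l with
  | nil => simp
  | cons b t ih => cases b <;> simp [List.count_cons] <;> omega

lemma fal_le_count (p : List Bool) : firstAscentLength p ≤ p.count true := by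
  have h1 : (p.takeWhile id).count true = (p.takeWhile id).length := by
    rw [List.count_eq_length]
    intro b hb
    have := List.mem_takeWhile_imp hb
    simp at this; simp [this]
  calc firstAscentLength p = (p.takeWhile id).count true := h1.symm
    _ ≤ p.count true := (List.takeWhile_sublist _).count_le _

lemma take_of_le_fal {p : List Bool} {k : ℕ} (h : k ≤ firstAscentLength p) :
    p.take k = List.replicate k true := by
  have h1 : p.take k = (p.take (firstAscentLength p)).take k := by
    rw [List.take_take, min_eq_left h]
  rw [h1, take_fal, List.take_replicate, min_eq_left h]

lemma rep_drop_of_le_fal {p : List Bool} {k : ℕ} (h : k ≤ firstAscentLength p) :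
    p = List.replicate k true ++ p.drop k := by
  conv_lhs => rw [← List.take_append_drop k p]
  rw [take_of_le_fal h]

/-! ### Dyck basics -/

lemma dyck_count_true {n : ℕ} {p : List Bool} (h : IsDyckPath n p) : p.count true = n := by
  have := count_bool p
  have := h.1; have := h.2.2; omega

lemma dyck_fal_le {n : ℕ} {p : List Bool} (h : IsDyckPath n p) : firstAscentLength p ≤ n := by
  have := fal_le_count p
  rw [dyck_count_true h] at this; exact this

lemma dyck_head {n : ℕ} {p : List Bool} (hn : 1 ≤ n) (h : IsDyckPath n p) :
    p[0]? = some true := by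
  have hl : 0 < p.length := by have := h.1; omega
  rcases p with _ | ⟨b, t⟩
  · simp at hl
  · cases b with
    | true => simp
    | false => have := h.2.1 1; simp [List.count_cons] at this

/-! ### replicate/append computations -/

lemma getElem?_rep (k i : ℕ) (l : List Bool) :
    (List.replicate k true ++ l)[i]? = if i < k then some true else l[i - k]? := by
  rcases lt_or_ge i k with h | h
  · rw [List.getElem?_append_left (by simpa using h)]
    simp [List.getElem?_replicate, h]
  · rw [List.getElem?_append_right (by simpa using h)]
    simp [Nat.not_lt.2 h]

lemma take_rep (k j : ℕ) (l : List Bool) :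
    (List.replicate k true ++ l).take (k + j) = List.replicate k true ++ l.take j := by
  have := List.take_append (l₁ := List.replicate k true) (l₂ := l) (i := k + j)
  simpa using this

lemma drop_rep (k j : ℕ) (l : List Bool) :
    (List.replicate k true ++ l).drop (k + j) = l.drop j := by
  have := List.drop_append (l₁ := List.replicate k true) (l₂ := l) (i := k + j)
  simpa using this

lemma count_take_rep (b : Bool) (k i : ℕ) (l : List Bool) :
    ((List.replicate k true ++ l).take i).count b
      = (List.replicate (min i k) true).count b + (l.take (i - k)).count b := by
  rw [List.take_append]
  simp [List.take_replicate, List.count_append]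

/-! ### valleys -/

lemma isValley_rep_iff (k j : ℕ) (l : List Bool) :
    IsValley (List.replicate k true ++ l) (k + j) ↔ IsValley l j := by
  unfold IsValley
  rw [getElem?_rep, getElem?_rep]
  simp [Nat.add_assoc]

lemma not_isValley_rep_low {k i : ℕ} (h : i < k) (l : List Bool) :
    ¬ IsValley (List.replicate k true ++ l) i := by
  unfold IsValley
  rw [getElem?_rep]
  simp [h]

lemma isValley_rep_elim {k i : ℕ} {l : List Bool}
    (h : IsValley (List.replicate k true ++ l) i) : k ≤ i ∧ IsValley l (i - k) := by
  rcases lt_or_ge i k with hik | hik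
  · exact absurd h (not_isValley_rep_low hik l)
  · refine ⟨hik, ?_⟩
    have : k + (i - k) = i := by omega
    rw [← this] at h
    exact (isValley_rep_iff _ _ _).1 h

lemma isValley_case2 (k i : ℕ) (r : List Bool) :
    IsValley (List.replicate k true ++ false :: true :: r) i ↔
      i = k ∨ (k + 2 ≤ i ∧ IsValley (List.replicate k true ++ r) (i - 2)) := by
  constructor
  · intro h
    obtain ⟨hk, hv⟩ := isValley_rep_elim h
    rcases Nat.lt_or_ge i (k + 2) with hi | hi
    · have hik : i = k ∨ i = k + 1 := by omega
      rcases hik with rfl | rfl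
      · exact Or.inl rfl
      · exfalso; unfold IsValley at hv
        simp [show k + 1 - k = 1 by omega] at hv
    · right
      refine ⟨hi, ?_⟩
      have hik : i - 2 = k + (i - k - 2) := by omega
      rw [hik, isValley_rep_iff]
      have hik2 : i - k = (i - k - 2) + 2 := by omega
      rw [hik2] at hv
      unfold IsValley at hv ⊢
      simpa using hv
  · rintro (rfl | ⟨hi, hv⟩)
    · have := (isValley_rep_iff i 0 (false :: true :: r))
      simpa using this.2 (by unfold IsValley; simp)
    · have hik : i - 2 = k + (i - k - 2) := by omega
      rw [hik, isValley_rep_iff] at hv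
      have : i = k + (i - k - 2 + 2) := by omega
      rw [this, isValley_rep_iff]
      unfold IsValley at hv ⊢
      simpa using hv

lemma isValley_case1 (k i : ℕ) (q : List Bool) (hq : q[0]? ≠ some true) :
    IsValley (List.replicate (k + 1) true ++ false :: q) (i + 2) ↔
      IsValley (List.replicate k true ++ q) i := by
  constructor
  · intro h
    obtain ⟨hk, hv⟩ := isValley_rep_elim h
    have hik : k ≤ i := by
      rcases Nat.lt_or_ge i k with hik | hik
      · exfalso
        have : i + 2 - (k + 1) = 0 := by omega
        rw [this] at hv
        unfold IsValley at hv
        exact hq (by simpa using hv.2)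
      · exact hik
    have h1 : i + 2 - (k + 1) = i - k + 1 := by omega
    rw [h1] at hv
    have : i = k + (i - k) := by omega
    rw [this, isValley_rep_iff]
    unfold IsValley at hv ⊢
    simpa using hv
  · intro h
    obtain ⟨hk, hv⟩ := isValley_rep_elim h
    have : i + 2 = (k + 1) + (i - k + 1) := by omega
    rw [this, isValley_rep_iff]
    unfold IsValley at hv ⊢
    simpa using hv

lemma valley_ge_case1 {k i : ℕ} {q : List Bool} (hq : q[0]? ≠ some true)
    (h : IsValley (List.replicate (k + 1) true ++ false :: q) i) : k + 2 ≤ i := by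
  obtain ⟨h1, h2⟩ := isValley_rep_elim h
  rcases eq_or_lt_of_le h1 with he | he
  · exfalso
    rw [show i - (k+1) = 0 by omega] at h2
    unfold IsValley at h2
    exact hq (by simpa using h2.2)
  · omega

lemma isValley_case2' {k i : ℕ} {r : List Bool} (hi : k + 1 ≤ i) :
    IsValley (List.replicate (k + 1) true ++ false :: true :: r) (i + 2) ↔
      IsValley (List.replicate (k + 1) true ++ r) i := by
  rw [isValley_case2]
  constructor
  · rintro (h | ⟨h1, h2⟩)
    · omega
    · simpa using h2
  · intro h
    exact Or.inr ⟨by omega, by simpa using h⟩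

/-! ### heights -/

lemma height_rep (k j : ℕ) (l : List Bool) :
    pathHeight (List.replicate k true ++ l) (k + j)
      = k + (l.take j).count true - (l.take j).count false := by
  unfold pathHeight
  rw [take_rep]
  simp [List.count_append, List.count_replicate]

lemma height_corr2 (k j : ℕ) (r : List Bool) :
    pathHeight (List.replicate k true ++ false :: true :: r) (k + j + 2)
      = pathHeight (List.replicate k true ++ r) (k + j) := by
  have h1 : k + j + 2 = k + (j + 2) := by omega
  rw [h1, height_rep, height_rep]
  simp [List.take_succ_cons, List.count_cons]
  omega

lemma height_corr1 (k j : ℕ) (q : List Bool) :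
    pathHeight (List.replicate (k + 1) true ++ false :: q) (k + j + 2)
      = pathHeight (List.replicate k true ++ q) (k + j) := by
  have h1 : k + j + 2 = (k + 1) + (j + 1) := by omega
  rw [h1, height_rep, height_rep]
  simp [List.take_succ_cons, List.count_cons]
  omega

lemma height_valley_vertex (k : ℕ) (r : List Bool) :
    pathHeight (List.replicate k true ++ false :: true :: r) (k + 1) = k - 1 := by
  have := height_rep k 1 (false :: true :: r)
  simpa using this

lemma height_corr1' {k i : ℕ} (q : List Bool) (hi : k ≤ i) :
    pathHeight (List.replicate (k + 1) true ++ false :: q) (i + 3)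
      = pathHeight (List.replicate k true ++ q) (i + 1) := by
  rw [show i + 3 = k + (i - k + 1) + 2 by omega, show i + 1 = k + (i - k + 1) by omega]
  exact height_corr1 k (i - k + 1) q

lemma height_corr2' {k i : ℕ} (r : List Bool) (hi : k + 1 ≤ i) :
    pathHeight (List.replicate (k + 1) true ++ false :: true :: r) (i + 3)
      = pathHeight (List.replicate (k + 1) true ++ r) (i + 1) := by
  rw [show i + 3 = (k + 1) + (i - (k + 1) + 1) + 2 by omega,
    show i + 1 = (k + 1) + (i - (k + 1) + 1) by omega]
  exact height_corr2 (k + 1) (i - (k + 1) + 1) r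

/-! ### Dyck transfers (proved elsewhere, included) -/

lemma dyck2 (n k : ℕ) (hk : 1 ≤ k) (r : List Bool) :
    IsDyckPath (n + 1) (List.replicate k true ++ false :: true :: r) ↔
      IsDyckPath n (List.replicate k true ++ r) := by
  constructor <;> rintro ⟨h1, h2, h3⟩ <;> refine ⟨?_, ?_, ?_⟩
  · simp at h1 ⊢; omega
  · intro i
    rcases le_or_gt i k with hik | hik
    · simp only [count_take_rep]
      simp [List.count_replicate, show i - k = 0 by omega]
    · have hcond := h2 (i + 2)
      simp only [count_take_rep] at hcond ⊢
      have he : (false :: true :: r).take (i + 2 - k) = false :: true :: r.take (i - k) := by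
        rw [show i + 2 - k = (i - k) + 2 by omega]
        simp
      rw [he] at hcond
      simp [List.count_replicate, List.count_cons, show min (i+2) k = k by omega,
        show min i k = k by omega] at hcond ⊢
      omega
  · simp [List.count_append, List.count_cons, List.count_replicate] at h3 ⊢; omega
  · simp at h1 ⊢; omega
  · intro i
    rcases le_or_gt i k with hik | hik
    · simp only [count_take_rep]
      simp [List.count_replicate, show i - k = 0 by omega]
    · rcases le_or_gt i (k + 1) with hik1 | hik1
      · have : i = k + 1 := by omega
        subst this
        simp only [count_take_rep]
        simp [List.count_replicate, show k + 1 - k = 1 by omega, show min (k+1) k = k by omega]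
        omega
      · have hcond := h2 (i - 2)
        simp only [count_take_rep] at hcond ⊢
        have he : (false :: true :: r).take (i - k) = false :: true :: r.take (i - 2 - k) := by
          rw [show i - k = (i - 2 - k) + 2 by omega]
          simp
        rw [he]
        simp [List.count_replicate, List.count_cons, show min (i-2) k = k by omega,
          show min i k = k by omega] at hcond ⊢
        omega
  · simp [List.count_append, List.count_cons, List.count_replicate] at h3 ⊢; omega

lemma dyck1 (n k : ℕ) (q : List Bool) :
    IsDyckPath (n + 1) (List.replicate (k + 1) true ++ false :: q) ↔
      IsDyckPath n (List.replicate k true ++ q) := by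
  constructor <;> rintro ⟨h1, h2, h3⟩ <;> refine ⟨?_, ?_, ?_⟩
  · simp at h1 ⊢; omega
  · intro i
    rcases le_or_gt i k with hik | hik
    · simp only [count_take_rep]
      simp [List.count_replicate, show i - k = 0 by omega]
    · have hcond := h2 (i + 2)
      simp only [count_take_rep] at hcond ⊢
      have he : (false :: q).take (i + 2 - (k + 1)) = false :: q.take (i - k) := by
        rw [show i + 2 - (k + 1) = (i - k) + 1 by omega]
        simp
      rw [he] at hcond
      simp [List.count_replicate, List.count_cons, show min (i+2) (k+1) = k + 1 by omega,
        show min i k = k by omega] at hcond ⊢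
      omega
  · simp [List.count_append, List.count_cons, List.count_replicate] at h3 ⊢; omega
  · simp at h1 ⊢; omega
  · intro i
    rcases le_or_gt i (k + 1) with hik | hik
    · simp only [count_take_rep]
      simp [List.count_replicate, show i - (k + 1) = 0 by omega]
    · have hcond := h2 (i - 2)
      simp only [count_take_rep] at hcond ⊢
      have he : (false :: q).take (i - (k + 1)) = false :: q.take (i - 2 - k) := by
        rw [show i - (k + 1) = (i - 2 - k) + 1 by omega]
        simp
      rw [he]
      simp [List.count_replicate, List.count_cons, show min (i-2) k = k by omega,
        show min i (k+1) = k + 1 by omega] at hcond ⊢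
      omega
  · simp [List.count_append, List.count_cons, List.count_replicate] at h3 ⊢; omega

end VM
namespace VM

/-! ### decomposition of a path with given first ascent -/

lemma decomp1 {N K : ℕ} {p : List Bool} (hd : IsDyckPath (N + 1) p)
    (hf : firstAscentLength p = K + 1) :
    p = List.replicate (K + 1) true ++ false :: p.drop (K + 2) := by
  have hlen := hd.1
  have hfle := dyck_fal_le hd
  have hkl : K + 1 < p.length := by omega
  have h2 : p[K + 1]? = some false := by
    have hne := fal_getElem?_ne p
    rw [hf] at hne
    have hg : p[K + 1]? = some p[K + 1] := List.getElem?_eq_getElem hkl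
    cases hb : p[K + 1] with
    | true => rw [hg, hb] at hne; exact absurd rfl hne
    | false => rw [hg, hb]
  have h3 : p.drop (K + 1) = false :: p.drop (K + 2) := by
    rw [List.drop_eq_getElem_cons hkl]
    have : p[K + 1] = false := by
      have hg : p[K + 1]? = some p[K + 1] := List.getElem?_eq_getElem hkl
      rw [hg] at h2; exact Option.some_injective _ h2
    rw [this]
  conv_lhs => rw [← List.take_append_drop (K + 1) p]
  rw [take_of_le_fal (by omega), h3]

lemma decomp2 {N K : ℕ} {p : List Bool} (hd : IsDyckPath (N + 1) p)
    (hf : firstAscentLength p = K + 1) (hc : p[K + 2]? = some true) :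
    p = List.replicate (K + 1) true ++ false :: true :: p.drop (K + 3) := by
  have h1 := decomp1 hd hf
  have hkl : K + 2 < p.length := by
    by_contra hcon
    rw [List.getElem?_eq_none (by omega)] at hc
    exact absurd hc (by simp)
  have h3 : p.drop (K + 2) = true :: p.drop (K + 3) := by
    rw [List.drop_eq_getElem_cons hkl]
    have hg : p[K + 2]? = some p[K + 2] := List.getElem?_eq_getElem hkl
    rw [hg] at hc
    rw [Option.some_injective _ hc]
  conv_lhs => rw [h1, h3]

/-! ### marking transfers -/

lemma mark_zero {p : List Bool} {m : ℕ → ℕ} (hm : IsValleyMarking p m) {i : ℕ}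
    (h : ¬ IsValley p i) : m i = 0 := (hm i).2 h

lemma marking_fwd1 {K : ℕ} {q : List Bool} {m : ℕ → ℕ} (hq : q[0]? ≠ some true)
    (hm : IsValleyMarking (List.replicate (K + 1) true ++ false :: q) m) :
    IsValleyMarking (List.replicate K true ++ q) (fun i => m (i + 2)) := by
  intro i
  constructor
  · intro hv
    have hv2 : IsValley (List.replicate (K + 1) true ++ false :: q) (i + 2) :=
      (isValley_case1 K i q hq).2 hv
    have hb := (hm (i + 2)).1 hv2
    have hK : K ≤ i := (isValley_rep_elim hv).1
    rw [show i + 2 + 1 = i + 3 by omega, height_corr1' q hK] at hb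
    exact hb
  · intro hv
    exact mark_zero hm (fun h => hv ((isValley_case1 K i q hq).1 h))

lemma marking_inv1 {K : ℕ} {q : List Bool} {m' : ℕ → ℕ} (hq : q[0]? ≠ some true)
    (hm : IsValleyMarking (List.replicate K true ++ q) m') :
    IsValleyMarking (List.replicate (K + 1) true ++ false :: q)
      (fun i => if i < 2 then 0 else m' (i - 2)) := by
  intro i
  rcases lt_or_ge i 2 with hi | hi
  · constructor
    · intro hv
      have := valley_ge_case1 hq hv; omega
    · intro _; simp [hi]
  · obtain ⟨j, rfl⟩ : ∃ j, i = j + 2 := ⟨i - 2, by omega⟩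
    simp only [show ¬ (j + 2 < 2) by omega, if_false, Nat.add_sub_cancel]
    constructor
    · intro hv
      have hv' : IsValley (List.replicate K true ++ q) j := (isValley_case1 K j q hq).1 hv
      have hb := (hm j).1 hv'
      have hK : K ≤ j := (isValley_rep_elim hv').1
      rw [show j + 2 + 1 = j + 3 by omega, height_corr1' q hK]
      exact hb
    · intro hv
      exact mark_zero hm (fun h => hv ((isValley_case1 K j q hq).2 h))

lemma marking_fwd2 {K : ℕ} {r : List Bool} {m : ℕ → ℕ}
    (hm : IsValleyMarking (List.replicate (K + 1) true ++ false :: true :: r) m) :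
    IsValleyMarking (List.replicate (K + 1) true ++ r)
      (fun i => if i < K + 1 then 0 else m (i + 2)) := by
  intro i
  rcases lt_or_ge i (K + 1) with hi | hi
  · constructor
    · intro hv; exact absurd hv (not_isValley_rep_low hi r)
    · intro _; simp [hi]
  · simp only [show ¬ (i < K + 1) by omega, if_false]
    constructor
    · intro hv
      have hv2 := (isValley_case2' hi).2 hv
      have hb := (hm (i + 2)).1 hv2
      rw [show i + 2 + 1 = i + 3 by omega, height_corr2' r hi] at hb
      exact hb
    · intro hv
      exact mark_zero hm (fun h => hv ((isValley_case2' hi).1 h))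

lemma marking_inv2 {K : ℕ} {r : List Bool} {m' : ℕ → ℕ} {a : ℕ} (ha : a ≤ K)
    (hm : IsValleyMarking (List.replicate (K + 1) true ++ r) m') :
    IsValleyMarking (List.replicate (K + 1) true ++ false :: true :: r)
      (fun i => if i = K + 1 then a else if i < K + 3 then 0 else m' (i - 2)) := by
  intro i
  rcases eq_or_ne i (K + 1) with rfl | hne
  · constructor
    · intro _
      rw [height_valley_vertex]
      simpa using ha
    · intro hv
      exfalso
      exact hv ((isValley_case2 (K + 1) (K + 1) r).2 (Or.inl rfl))
  · rcases lt_or_ge i (K + 3) with hi | hi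
    · constructor
      · intro hv
        rcases (isValley_case2 (K + 1) i r).1 hv with h | ⟨h, _⟩
        · exact absurd h hne
        · omega
      · intro _; simp [hne, hi]
    · obtain ⟨j, rfl⟩ : ∃ j, i = j + 2 := ⟨i - 2, by omega⟩
      have hj : K + 1 ≤ j := by omega
      simp only [hne, if_false, show ¬ (j + 2 < K + 3) by omega, Nat.add_sub_cancel]
      constructor
      · intro hv
        have hv' := (isValley_case2' hj).1 hv
        have hb := (hm j).1 hv'
        rw [show j + 2 + 1 = j + 3 by omega, height_corr2' r hj]
        exact hb
      · intro hv
        exact mark_zero hm (fun h => hv ((isValley_case2' hj).2 h))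

end VM
namespace VM

abbrev Sset (n k : ℕ) : Type :=
  {pm : List Bool × (ℕ → ℕ) // IsDyckPath n pm.1 ∧ IsValleyMarking pm.1 pm.2 ∧
    firstAscentLength pm.1 = k}

abbrev Tset (n k : ℕ) : Type :=
  {pm : List Bool × (ℕ → ℕ) // IsDyckPath n pm.1 ∧ IsValleyMarking pm.1 pm.2 ∧
    k ≤ firstAscentLength pm.1}

lemma height_le_length (p : List Bool) (j : ℕ) : pathHeight p j ≤ p.length := by
  unfold pathHeight
  have h1 : (p.take j).count true ≤ (p.take j).length := List.count_le_length
  have h2 : (p.take j).length ≤ p.length := by simp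
  omega

lemma mark_le {n : ℕ} {p : List Bool} {m : ℕ → ℕ} (hd : IsDyckPath n p)
    (hm : IsValleyMarking p m) (i : ℕ) : m i ≤ 2 * n := by
  by_cases hv : IsValley p i
  · have := (hm i).1 hv
    have := height_le_length p (i + 1)
    have := hd.1
    omega
  · rw [(hm i).2 hv]; omega

lemma mark_zero_ge {n : ℕ} {p : List Bool} {m : ℕ → ℕ} (hd : IsDyckPath n p)
    (hm : IsValleyMarking p m) {i : ℕ} (hi : 2 * n ≤ i) : m i = 0 := by
  refine (hm i).2 (fun hv => ?_)
  have h0 : p[i]? = none := List.getElem?_eq_none (by rw [hd.1]; omega)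
  unfold IsValley at hv
  rw [h0] at hv
  exact absurd hv.1 (by simp)

instance finM (n : ℕ) :
    Finite {pm : List Bool × (ℕ → ℕ) // IsDyckPath n pm.1 ∧ IsValleyMarking pm.1 pm.2} := by
  haveI hfin : Finite (List.Vector Bool (2 * n) × (Fin (2 * n) → Fin (2 * n + 1))) :=
    inferInstance
  let f : {pm : List Bool × (ℕ → ℕ) // IsDyckPath n pm.1 ∧ IsValleyMarking pm.1 pm.2} →
      List.Vector Bool (2 * n) × (Fin (2 * n) → Fin (2 * n + 1)) := fun x =>
    ((⟨x.1.1, x.2.1.1⟩ : List.Vector Bool (2 * n)),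
      fun i : Fin (2 * n) => (⟨x.1.2 i.1, Nat.lt_succ_of_le (mark_le x.2.1 x.2.2 i.1)⟩ :
        Fin (2 * n + 1)))
  apply Finite.of_injective f
  intro a b hab
  simp only [f] at hab
  have h1 : a.1.1 = b.1.1 := congrArg Subtype.val (congrArg Prod.fst hab)
  have h2 := congrArg Prod.snd hab
  apply Subtype.ext
  apply Prod.ext h1
  funext i
  rcases lt_or_ge i (2 * n) with hi | hi
  · exact congrArg Fin.val (congrFun h2 ⟨i, hi⟩)
  · rw [mark_zero_ge a.2.1 a.2.2 hi, mark_zero_ge b.2.1 b.2.2 hi]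

instance finS (n k : ℕ) : Finite (Sset n k) := by
  apply Finite.of_injective
    (f := fun x : Sset n k =>
      (⟨x.1, x.2.1, x.2.2.1⟩ :
        {pm : List Bool × (ℕ → ℕ) // IsDyckPath n pm.1 ∧ IsValleyMarking pm.1 pm.2}))
  intro a b hab
  have h := congrArg Subtype.val hab
  exact Subtype.ext h

instance finT (n k : ℕ) : Finite (Tset n k) := by
  apply Finite.of_injective
    (f := fun x : Tset n k =>
      (⟨x.1, x.2.1, x.2.2.1⟩ :
        {pm : List Bool × (ℕ → ℕ) // IsDyckPath n pm.1 ∧ IsValleyMarking pm.1 pm.2}))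
  intro a b hab
  have h := congrArg Subtype.val hab
  exact Subtype.ext h

/-! ### helper facts used in the equivalence -/

lemma getElem?_drop' (p : List Bool) (i j : ℕ) : (p.drop i)[j]? = p[i + j]? :=
  (List.getElem?_drop)

/-- membership for forward map, case 1 -/
lemma fwd1_mem {N K : ℕ} {p : List Bool} {m : ℕ → ℕ}
    (hd : IsDyckPath (N + 1) p) (hm : IsValleyMarking p m)
    (hf : firstAscentLength p = K + 1) (hc : ¬ p[K + 2]? = some true) :
    IsDyckPath N (List.replicate K true ++ p.drop (K + 2)) ∧
      IsValleyMarking (List.replicate K true ++ p.drop (K + 2)) (fun i => m (i + 2)) ∧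
      firstAscentLength (List.replicate K true ++ p.drop (K + 2)) = K := by
  set q := p.drop (K + 2) with hqdef
  have hq : q[0]? ≠ some true := by
    rw [hqdef, getElem?_drop']
    simpa using hc
  have hp := decomp1 hd hf
  refine ⟨?_, ?_, ?_⟩
  · rw [← dyck1 N K q, ← hp]; exact hd
  · have : IsValleyMarking (List.replicate (K + 1) true ++ false :: q) m := by
      rw [← hp]; exact hm
    exact marking_fwd1 hq this
  · apply fal_eq
    · intro i hi
      rw [getElem?_rep]
      simp [hi]
    · rw [getElem?_rep]
      simpa using hq

/-- membership for forward map, case 2 -/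
lemma fwd2_mem {N K : ℕ} {p : List Bool} {m : ℕ → ℕ}
    (hd : IsDyckPath (N + 1) p) (hm : IsValleyMarking p m)
    (hf : firstAscentLength p = K + 1) (hc : p[K + 2]? = some true) :
    IsDyckPath N (List.replicate (K + 1) true ++ p.drop (K + 3)) ∧
      IsValleyMarking (List.replicate (K + 1) true ++ p.drop (K + 3))
        (fun i => if i < K + 1 then 0 else m (i + 2)) ∧
      K + 1 ≤ firstAscentLength (List.replicate (K + 1) true ++ p.drop (K + 3)) := by
  set r := p.drop (K + 3) with hrdef
  have hp := decomp2 hd hf hc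
  refine ⟨?_, ?_, ?_⟩
  · rw [← dyck2 N (K + 1) (by omega) r, ← hp]; exact hd
  · have : IsValleyMarking (List.replicate (K + 1) true ++ false :: true :: r) m := by
      rw [← hp]; exact hm
    exact marking_fwd2 this
  · apply le_fal
    intro i hi
    rw [getElem?_rep]
    simp [hi]

/-- the mark at the first valley is small, case 2 -/
lemma fwd2_mark_lt {N K : ℕ} {p : List Bool} {m : ℕ → ℕ}
    (hd : IsDyckPath (N + 1) p) (hm : IsValleyMarking p m)
    (hf : firstAscentLength p = K + 1) (hc : p[K + 2]? = some true) :
    m (K + 1) < K + 1 := by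
  have hp := decomp2 hd hf hc
  have hv : IsValley p (K + 1) := by
    rw [hp]
    exact (isValley_case2 (K + 1) (K + 1) (p.drop (K + 3))).2 (Or.inl rfl)
  have hb := (hm (K + 1)).1 hv
  rw [hp] at hb
  rw [height_valley_vertex (K + 1) (p.drop (K + 3))] at hb
  omega

/-- membership for inverse map, case 1 -/
lemma inv1_mem {N K : ℕ} {p' : List Bool} {m' : ℕ → ℕ}
    (hd : IsDyckPath N p') (hm : IsValleyMarking p' m')
    (hf : firstAscentLength p' = K) :
    IsDyckPath (N + 1) (List.replicate (K + 1) true ++ false :: p'.drop K) ∧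
      IsValleyMarking (List.replicate (K + 1) true ++ false :: p'.drop K)
        (fun i => if i < 2 then 0 else m' (i - 2)) ∧
      firstAscentLength (List.replicate (K + 1) true ++ false :: p'.drop K) = K + 1 := by
  set q := p'.drop K with hqdef
  have hp' : p' = List.replicate K true ++ q := rep_drop_of_le_fal (by omega)
  have hq : q[0]? ≠ some true := by
    rw [hqdef, getElem?_drop']
    rw [← hf]
    simpa using fal_getElem?_ne p'
  refine ⟨?_, ?_, ?_⟩
  · rw [dyck1 N K q, ← hp']; exact hd
  · apply marking_inv1 hq
    rw [← hp']; exact hm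
  · apply fal_eq
    · intro i hi
      rw [getElem?_rep]
      simp [hi]
    · rw [getElem?_rep]
      simp

/-- membership for inverse map, case 2 -/
lemma inv2_mem {N K : ℕ} {p' : List Bool} {m' : ℕ → ℕ} {a : ℕ} (ha : a ≤ K)
    (hd : IsDyckPath N p') (hm : IsValleyMarking p' m')
    (hf : K + 1 ≤ firstAscentLength p') :
    IsDyckPath (N + 1) (List.replicate (K + 1) true ++ false :: true :: p'.drop (K + 1)) ∧
      IsValleyMarking (List.replicate (K + 1) true ++ false :: true :: p'.drop (K + 1))
        (fun i => if i = K + 1 then a else if i < K + 3 then 0 else m' (i - 2)) ∧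
      firstAscentLength (List.replicate (K + 1) true ++ false :: true :: p'.drop (K + 1))
        = K + 1 := by
  set r := p'.drop (K + 1) with hrdef
  have hp' : p' = List.replicate (K + 1) true ++ r := rep_drop_of_le_fal hf
  refine ⟨?_, ?_, ?_⟩
  · rw [dyck2 N (K + 1) (by omega) r, ← hp']; exact hd
  · apply marking_inv2 ha
    rw [← hp']; exact hm
  · apply fal_eq
    · intro i hi
      rw [getElem?_rep]
      simp [hi]
    · rw [getElem?_rep]
      simp

end VM
namespace VM

lemma drop_rep0 (k : ℕ) (l : List Bool) : (List.replicate k true ++ l).drop k = l := by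
  simpa using drop_rep k 0 l

def fwdFun (N K : ℕ) : Sset (N + 1) (K + 1) → (Sset N K ⊕ (Fin (K + 1) × Tset N (K + 1))) :=
  fun x =>
    if hc : x.1.1[K + 2]? = some true then
      Sum.inr (⟨x.1.2 (K + 1), fwd2_mark_lt x.2.1 x.2.2.1 x.2.2.2 hc⟩,
        ⟨(List.replicate (K + 1) true ++ x.1.1.drop (K + 3),
            fun i => if i < K + 1 then 0 else x.1.2 (i + 2)),
          fwd2_mem x.2.1 x.2.2.1 x.2.2.2 hc⟩)
    else
      Sum.inl ⟨(List.replicate K true ++ x.1.1.drop (K + 2), fun i => x.1.2 (i + 2)),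
        fwd1_mem x.2.1 x.2.2.1 x.2.2.2 hc⟩

def invFunX (N K : ℕ) : (Sset N K ⊕ (Fin (K + 1) × Tset N (K + 1))) → Sset (N + 1) (K + 1) :=
  fun y =>
    match y with
    | Sum.inl z =>
        ⟨(List.replicate (K + 1) true ++ false :: z.1.1.drop K,
            fun i => if i < 2 then 0 else z.1.2 (i - 2)),
          inv1_mem z.2.1 z.2.2.1 z.2.2.2⟩
    | Sum.inr (a, z) =>
        ⟨(List.replicate (K + 1) true ++ false :: true :: z.1.1.drop (K + 1),
            fun i => if i = K + 1 then a.1 else if i < K + 3 then 0 else z.1.2 (i - 2)),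
          inv2_mem (Nat.lt_succ_iff.1 a.2) z.2.1 z.2.2.1 z.2.2.2⟩

def mainEquiv (N K : ℕ) : Sset (N + 1) (K + 1) ≃ (Sset N K ⊕ (Fin (K + 1) × Tset N (K + 1))) where
  toFun := fwdFun N K
  invFun := invFunX N K
  left_inv := by
    rintro ⟨⟨p, m⟩, hd, hm, hf⟩
    unfold fwdFun
    by_cases hc : p[K + 2]? = some true
    · rw [dif_pos hc]
      unfold invFunX
      apply Subtype.ext
      dsimp only
      have hp := decomp2 hd hf hc
      have hlist : List.replicate (K + 1) true ++ false :: true ::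
          (List.replicate (K + 1) true ++ p.drop (K + 3)).drop (K + 1) = p := by
        rw [drop_rep0]
        exact hp.symm
      refine Prod.ext hlist ?_
      funext i
      dsimp only
      rcases eq_or_ne i (K + 1) with rfl | hne
      · simp
      · rcases lt_or_ge i (K + 3) with hi | hi
        · simp only [hne, if_false, hi, if_true]
          refine (mark_zero hm ?_).symm
          rw [hp]
          intro hv
          rcases (isValley_case2 (K + 1) i (p.drop (K + 3))).1 hv with h | ⟨h, _⟩
          · exact hne h
          · omega
        · simp only [hne, if_false, show ¬ i < K + 3 by omega, if_false,
            show ¬ i - 2 < K + 1 by omega]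
          exact congrArg m (by omega)
    · rw [dif_neg hc]
      unfold invFunX
      apply Subtype.ext
      dsimp only
      have hp := decomp1 hd hf
      have hq : (p.drop (K + 2))[0]? ≠ some true := by
        rw [getElem?_drop']
        simpa using hc
      have hlist : List.replicate (K + 1) true ++ false ::
          (List.replicate K true ++ p.drop (K + 2)).drop K = p := by
        rw [drop_rep0]
        exact hp.symm
      refine Prod.ext hlist ?_
      funext i
      dsimp only
      rcases lt_or_ge i 2 with hi | hi
      · simp only [hi, if_true]
        refine (mark_zero hm ?_).symm
        rw [hp]
        intro hv
        have := valley_ge_case1 hq hv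
        omega
      · simp only [show ¬ i < 2 by omega, if_false]
        exact congrArg m (by omega)
  right_inv := by
    rintro (⟨⟨p', m'⟩, hd, hm, hf⟩ | ⟨a, ⟨⟨p', m'⟩, hd, hm, hf⟩⟩)
    · unfold invFunX fwdFun
      dsimp only
      have hp' : p' = List.replicate K true ++ p'.drop K :=
        rep_drop_of_le_fal (le_of_eq hf.symm)
      have hc : ¬ (List.replicate (K + 1) true ++ false :: p'.drop K)[K + 2]? = some true := by
        rw [getElem?_rep]
        simp only [show ¬ (K + 2 < K + 1) by omega, if_false,
          show K + 2 - (K + 1) = 1 by omega]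
        have h0 : p'[K]? ≠ some true := by rw [← hf]; exact fal_getElem?_ne p'
        intro hcon
        apply h0
        have h1 : (p'.drop K)[0]? = some true := by simpa using hcon
        rw [getElem?_drop'] at h1
        simpa using h1
      rw [dif_neg hc]
      refine congrArg Sum.inl (Subtype.ext (Prod.ext ?_ ?_))
      · dsimp only
        have : (List.replicate (K + 1) true ++ false :: p'.drop K).drop (K + 2) = p'.drop K := by
          have := drop_rep (K + 1) 1 (false :: p'.drop K)
          simpa [show K + 2 = K + 1 + 1 by omega] using this
        rw [this]
        exact hp'.symm
      · funext i
        dsimp only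
        simp only [show ¬ (i + 2 < 2) by omega, if_false, Nat.add_sub_cancel]
    · unfold invFunX fwdFun
      dsimp only
      have hp' : p' = List.replicate (K + 1) true ++ p'.drop (K + 1) :=
        rep_drop_of_le_fal hf
      have hc : (List.replicate (K + 1) true ++ false :: true :: p'.drop (K + 1))[K + 2]?
          = some true := by
        rw [getElem?_rep]
        simp [show ¬ (K + 2 < K + 1) by omega, show K + 2 - (K + 1) = 1 by omega]
      rw [dif_pos hc]
      refine congrArg Sum.inr (Prod.ext ?_ ?_)
      · apply Fin.ext
        simp
      · refine Subtype.ext (Prod.ext ?_ ?_)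
        · dsimp only
          have : (List.replicate (K + 1) true ++ false :: true :: p'.drop (K + 1)).drop (K + 3)
              = p'.drop (K + 1) := by
            have := drop_rep (K + 1) 2 (false :: true :: p'.drop (K + 1))
            simpa [show K + 3 = K + 1 + 2 by omega] using this
          rw [this]
          exact hp'.symm
        · funext i
          dsimp only
          rcases lt_or_ge i (K + 1) with hi | hi
          · simp only [hi, if_true]
            refine (mark_zero hm ?_).symm
            rw [hp']
            exact not_isValley_rep_low hi _
          · simp only [show ¬ (i < K + 1) by omega, if_false,
              show i + 2 ≠ K + 1 by omega, show ¬ (i + 2 < K + 3) by omega,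
              Nat.add_sub_cancel]

end VM
namespace VM

def splitEquiv (n k : ℕ) : Tset n k ≃ (Sset n k ⊕ Tset n (k + 1)) where
  toFun x :=
    if hc : firstAscentLength x.1.1 = k then Sum.inl ⟨x.1, x.2.1, x.2.2.1, hc⟩
    else Sum.inr ⟨x.1, x.2.1, x.2.2.1, by have := x.2.2.2; omega⟩
  invFun y :=
    match y with
    | Sum.inl z => ⟨z.1, z.2.1, z.2.2.1, le_of_eq z.2.2.2.symm⟩
    | Sum.inr z => ⟨z.1, z.2.1, z.2.2.1, by have := z.2.2.2; omega⟩
  left_inv := by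
    rintro ⟨pm, h⟩
    dsimp only
    by_cases hc : firstAscentLength pm.1 = k
    · rw [dif_pos hc]
    · rw [dif_neg hc]
  right_inv := by
    rintro (z | z)
    · dsimp only
      rw [dif_pos z.2.2.2]
    · dsimp only
      rw [dif_neg (show ¬ firstAscentLength z.1.1 = k by have := z.2.2.2; omega)]

lemma T_empty (n k : ℕ) (h : n < k) : IsEmpty (Tset n k) :=
  ⟨fun x => by have := dyck_fal_le x.2.1; have := x.2.2.2; omega⟩

lemma card_T_eq (n : ℕ) : ∀ k, Nat.card (Tset n k) = ∑ j ∈ Finset.Icc k n, Nat.card (Sset n j) := by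
  have main : ∀ d k, n + 1 - k = d →
      Nat.card (Tset n k) = ∑ j ∈ Finset.Icc k n, Nat.card (Sset n j) := by
    intro d
    induction d with
    | zero =>
      intro k hk
      haveI := T_empty n k (by omega)
      rw [Nat.card_of_isEmpty, Finset.Icc_eq_empty (by omega), Finset.sum_empty]
    | succ d ih =>
      intro k hk
      have hkn : k ≤ n := by omega
      rw [Nat.card_congr (splitEquiv n k), Nat.card_sum, ih (k + 1) (by omega)]
      rw [Finset.Icc_eq_cons_Ioc hkn, Finset.sum_cons, ← Finset.Icc_add_one_left_eq_Ioc]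
  intro k
  exact main (n + 1 - k) k rfl

lemma card_rec (N K : ℕ) :
    Nat.card (Sset (N + 1) (K + 1))
      = Nat.card (Sset N K) + (K + 1) * ∑ j ∈ Finset.Icc (K + 1) N, Nat.card (Sset N j) := by
  rw [Nat.card_congr (mainEquiv N K), Nat.card_sum, Nat.card_prod,
    Nat.card_eq_fintype_card (α := Fin (K + 1)), Fintype.card_fin, card_T_eq]

lemma dyck_zero : IsDyckPath 0 ([] : List Bool) := ⟨by simp, by intro i; simp, by simp⟩

lemma marking_nil : IsValleyMarking [] (fun _ => 0) := by
  intro i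
  constructor
  · intro hv; exact absurd hv.1 (by simp)
  · intro _; rfl

lemma S00_ext (x : Sset 0 0) : x.1 = ([], fun _ => 0) := by
  obtain ⟨⟨p, m⟩, hd, hm, _⟩ := x
  have hp : p = [] := by
    have h0 : p.length = 2 * 0 := hd.1
    exact List.length_eq_zero_iff.1 (by omega)
  subst hp
  refine Prod.ext rfl ?_
  funext i
  exact mark_zero hm (fun hv => absurd hv.1 (by simp))

lemma card_S00 : Nat.card (Sset 0 0) = 1 := by
  rw [Nat.card_eq_one_iff_unique]
  exact ⟨⟨fun x y => Subtype.ext (by rw [S00_ext x, S00_ext y])⟩,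
    ⟨⟨([], fun _ => 0), dyck_zero, marking_nil, rfl⟩⟩⟩

lemma card_S0 (n : ℕ) (hn : 1 ≤ n) : Nat.card (Sset n 0) = 0 := by
  haveI : IsEmpty (Sset n 0) := ⟨fun x => by
    obtain ⟨⟨p, m⟩, hd, hm, hf⟩ := x
    have h1 : 1 ≤ firstAscentLength p :=
      le_fal (by intro i hi; interval_cases i; exact dyck_head hn hd)
    have hf' : firstAscentLength p = 0 := hf
    omega⟩
  rw [Nat.card_of_isEmpty]

end VM

theorem stmt9 (u : ℕ → ℕ → ℕ) (hu0 : u 0 0 = 1)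
    (hu1 : ∀ n : ℕ, 1 ≤ n → u n 0 = 0)
    (hrec : ∀ n k : ℕ, 1 ≤ k → k ≤ n →
      u n k = u (n - 1) (k - 1) + k * ∑ j ∈ Finset.Icc k (n - 1), u (n - 1) j)
    (n k : ℕ) (hn : 1 ≤ n) (hk : 1 ≤ k) (hkn : k ≤ n) :
    Nat.card {pm : List Bool × (ℕ → ℕ) //
        IsDyckPath n pm.1 ∧ IsValleyMarking pm.1 pm.2 ∧
          firstAscentLength pm.1 = k}
      = u n k := by
  have key : ∀ n k : ℕ, k ≤ n → Nat.card (VM.Sset n k) = u n k := by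
    intro n
    induction n with
    | zero =>
      intro k hk0
      interval_cases k
      rw [VM.card_S00, hu0]
    | succ N ih =>
      intro k hk0
      rcases Nat.eq_zero_or_pos k with rfl | hkpos
      · rw [VM.card_S0 (N + 1) (by omega), hu1 (N + 1) (by omega)]
      · obtain ⟨K, rfl⟩ : ∃ K, k = K + 1 := ⟨k - 1, by omega⟩
        rw [VM.card_rec N K, hrec (N + 1) (K + 1) (by omega) hk0]
        simp only [Nat.add_sub_cancel]
        rw [ih K (by omega)]
        congr 1
        congr 1
        apply Finset.sum_congr rfl
        intro j hj
        rw [Finset.mem_Icc] at hj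
        exact ih j (by omega)
  exact key n k hkn
end
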